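/- arXiv:1707.03928 — 9 statements merged into one kernel-verified Lean document; each statement's English description precedes it below -/
import Mathlib

section
/- Let n be a positive integer and let A = {a_1, a_2, …, a_n} be a set of n distinct positive integers with a_1 + a_2 + … + a_n = n². Then A is an extremal Skolem set (i.e., the set {1, 2, …, 2n} can be partitioned into n pairs (s_i, t_i) with t_i − s_i = a_i for i = 1, …, n) if and only if there exists a permutation π of {1, …, n} whose diagonal X-ray d(π) = (d_1, …, d_{2n−1}) satisfies d_k = 1 if k ∈ A and d_k = 0 otherwise. -/
/-- The multiset of all endpoints of the pairs `(s i, t i)`. -/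
def pairsMultiset (n : ℕ) (s t : Fin n → ℕ) : Multiset ℕ :=
  (Finset.univ : Finset (Fin n)).val.bind fun i => {s i, t i}

/-- The pairs `(s i, t i)` form a partition of `{1, 2, …, 2n}`. -/
def IsPartitionOfIcc (n : ℕ) (s t : Fin n → ℕ) : Prop :=
  pairsMultiset n s t = Multiset.map (· + 1) (Multiset.range (2 * n))

/-- The `k`-th entry (`k = 1, …, 2n-1`) of the diagonal (Toeplitz) X-ray of a
permutation `π` of `{1, …, n}` (encoded 0-based on `Fin n`):
`d_k = #{i : i - π(i) = n - k}`. -/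
def diagXray (n : ℕ) (π : Equiv.Perm (Fin n)) (k : ℤ) : ℕ :=
  (Finset.univ.filter fun i : Fin n =>
    ((i : ℕ) : ℤ) - ((π i : ℕ) : ℤ) = (n : ℤ) - k).card

lemma bind_pair {α : Type*} (m : Multiset α) (f g : α → ℕ) :
    (m.bind fun i => ({f i, g i} : Multiset ℕ)) = m.map f + m.map g := by
  simp only [Multiset.insert_eq_cons, ← Multiset.singleton_add, Multiset.bind_add,
    Multiset.bind_singleton]

lemma Icc_one_succ (n : ℕ) : Finset.Icc 1 (n + 1) = insert (n + 1) (Finset.Icc 1 n) := by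
  ext x; simp [Finset.mem_Icc]; omega

lemma sum_Icc_one : ∀ n : ℕ, 2 * (∑ i ∈ Finset.Icc 1 n, i) = n * (n + 1) := by
  intro n
  induction n with
  | zero => simp
  | succ n ih =>
    rw [Icc_one_succ, Finset.sum_insert (by simp)]
    ring_nf
    ring_nf at ih
    omega

lemma min_sum_set : ∀ (n : ℕ) (S : Finset ℕ), S.card = n → 0 ∉ S →
    2 * (∑ i ∈ S, i) ≤ n * (n + 1) → S = Finset.Icc 1 n := by
  intro n
  induction n with
  | zero => intro S hc _ _; simpa [Finset.card_eq_zero] using hc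
  | succ n ih =>
    intro S hc h0 hsum
    have hring : (n + 1) * (n + 1 + 1) = n * (n + 1) + 2 * (n + 1) := by ring
    have hne : S.Nonempty := Finset.card_pos.mp (by omega)
    set m := S.max' hne with hm
    have hmem : m ∈ S := S.max'_mem hne
    have hle : ∀ x ∈ S, x ≤ m := fun x hx => S.le_max' x hx
    have hsub : S ⊆ Finset.Icc 1 m := by
      intro x hx
      have : x ≠ 0 := fun h => h0 (h ▸ hx)
      exact Finset.mem_Icc.mpr ⟨by omega, hle x hx⟩
    have hmn : n + 1 ≤ m := by
      have h2 := Finset.card_le_card hsub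
      rw [Nat.card_Icc, hc] at h2
      omega
    have hcard' : (S.erase m).card = n := by rw [Finset.card_erase_of_mem hmem, hc]; omega
    have hsum' : (∑ i ∈ S.erase m, i) + m = ∑ i ∈ S, i := Finset.sum_erase_add S _ hmem
    have hIH : S.erase m = Finset.Icc 1 n := by
      apply ih _ hcard' (fun h => h0 (Finset.mem_of_mem_erase h))
      omega
    have hsumIcc := sum_Icc_one n
    rw [hIH] at hsum'
    have hm1 : m = n + 1 := by omega
    have hS : S = insert m (S.erase m) := (Finset.insert_erase hmem).symm
    rw [hS, hIH, hm1, Icc_one_succ]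

lemma map_val_univ (n : ℕ) :
    Multiset.map Fin.val (Finset.univ.val : Multiset (Fin n)) = Multiset.range n := by
  have := congrArg Finset.val (Fin.map_valEmbedding_univ (n := n))
  rw [Nat.Iio_eq_range, Finset.range_val] at this
  rw [Finset.map_val] at this; exact this

lemma map_univ_comp_perm {n : ℕ} (e : Fin n ≃ Fin n) (g : Fin n → ℕ) :
    Multiset.map (fun i => g (e i)) Finset.univ.val = Multiset.map g Finset.univ.val := by
  have h : Multiset.map (⇑e) Finset.univ.val = Finset.univ.val := by
    have := congrArg Finset.val (Finset.map_univ_equiv e)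
    simpa using this
  conv_rhs => rw [← h, Multiset.map_map]
  rfl

lemma two_blocks (n : ℕ) :
    Multiset.map (fun m => m + 1) (Multiset.range n) +
      Multiset.map (fun m => n + m + 1) (Multiset.range n)
    = Multiset.map (· + 1) (Multiset.range (2 * n)) := by
  rw [two_mul, Multiset.range_add, Multiset.map_add, Multiset.map_map]
  rfl

lemma filter_shift (n k : ℕ) (π : Equiv.Perm (Fin n)) :
    (Finset.univ.filter fun i : Fin n => ((i : ℕ) : ℤ) - ((π i : ℕ) : ℤ) = (n : ℤ) - (k : ℤ)) =
    Finset.univ.filter fun i : Fin n => n + (π i : ℕ) - (i : ℕ) = k := by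
  apply Finset.filter_congr
  intro i _
  have h1 := i.isLt
  have h2 := (π i).isLt
  constructor <;> intro h <;> omega

theorem stmt0 (n : ℕ) (hn : 0 < n) (a : Fin n → ℕ)
    (ha_pos : ∀ i, 0 < a i) (ha_inj : Function.Injective a)
    (ha_sum : ∑ i, a i = n ^ 2) :
    (∃ s t : Fin n → ℕ, IsPartitionOfIcc n s t ∧ ∀ i, t i = s i + a i) ↔
      ∃ π : Equiv.Perm (Fin n), ∀ k : ℕ, 1 ≤ k → k ≤ 2 * n - 1 →
        diagXray n π k = if ∃ i, a i = k then 1 else 0 := by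
  have hnodupM : (Multiset.map (· + 1) (Multiset.range (2 * n))).Nodup :=
    (Multiset.nodup_range _).map (fun a b => by omega)
  constructor
  · -- forward: Skolem partition → permutation
    rintro ⟨s, t, hpart, hts⟩
    have hM : Multiset.map s Finset.univ.val + Multiset.map t Finset.univ.val =
        Multiset.map (· + 1) (Multiset.range (2 * n)) := by
      rw [← bind_pair]; exact hpart
    -- injectivity of s and t
    have hnods : (Multiset.map s Finset.univ.val).Nodup :=
      Multiset.nodup_of_le (hM ▸ Multiset.le_add_right _ _) hnodupM
    have hnodt : (Multiset.map t Finset.univ.val).Nodup :=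
      Multiset.nodup_of_le (hM ▸ Multiset.le_add_left _ _) hnodupM
    have hsinj : Function.Injective s := fun i j hij =>
      Multiset.inj_on_of_nodup_map hnods i (Finset.mem_val.mpr (Finset.mem_univ i))
        j (Finset.mem_val.mpr (Finset.mem_univ j)) hij
    have htinj : Function.Injective t := fun i j hij =>
      Multiset.inj_on_of_nodup_map hnodt i (Finset.mem_val.mpr (Finset.mem_univ i))
        j (Finset.mem_val.mpr (Finset.mem_univ j)) hij
    -- membership bounds
    have hmemM : ∀ x ∈ Multiset.map (· + 1) (Multiset.range (2 * n)), 1 ≤ x ∧ x ≤ 2 * n := by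
      intro x hx
      obtain ⟨m, hm, rfl⟩ := Multiset.mem_map.mp hx
      rw [Multiset.mem_range] at hm
      omega
    have hsmem : ∀ i, 1 ≤ s i ∧ s i ≤ 2 * n := by
      intro i
      apply hmemM
      rw [← hM]
      exact Multiset.mem_add.mpr (Or.inl (Multiset.mem_map_of_mem s
        (Finset.mem_val.mpr (Finset.mem_univ i))))
    have htmem : ∀ i, 1 ≤ t i ∧ t i ≤ 2 * n := by
      intro i
      apply hmemM
      rw [← hM]
      exact Multiset.mem_add.mpr (Or.inr (Multiset.mem_map_of_mem t
        (Finset.mem_val.mpr (Finset.mem_univ i))))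
    -- sums
    have hsum_total : (∑ i, s i) + (∑ i, t i) = ∑ m ∈ Finset.range (2 * n), (m + 1) := by
      have := congrArg Multiset.sum hM
      rw [Multiset.sum_add] at this
      rw [Finset.sum, Finset.sum, Finset.sum, Finset.range_val]
      exact this
    have hsum_t : ∑ i, t i = (∑ i, s i) + n ^ 2 := by
      rw [← ha_sum, ← Finset.sum_add_distrib]
      exact Finset.sum_congr rfl fun i _ => hts i
    have hgauss : (∑ i ∈ Finset.range (2 * n), i) * 2 = 2 * n * (2 * n - 1) :=
      Finset.sum_range_id_mul_two _
    have hshift : ∑ m ∈ Finset.range (2 * n), (m + 1) =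
        (∑ i ∈ Finset.range (2 * n), i) + 2 * n := by
      rw [Finset.sum_add_distrib, Finset.sum_const, Finset.card_range, smul_eq_mul, mul_one]
    have e2 : 2 * n * (2 * n - 1) + 2 * n = 4 * (n * n) := by
      have h1 : 2 * n - 1 + 1 = 2 * n := by omega
      calc 2 * n * (2 * n - 1) + 2 * n = 2 * n * ((2 * n - 1) + 1) := by ring
        _ = 2 * n * (2 * n) := by rw [h1]
        _ = 4 * (n * n) := by ring
    have e3 : n ^ 2 = n * n := sq n
    have e4 : n * (n + 1) = n * n + n := by ring
    have key : 2 * (∑ i, s i) = n * (n + 1) := by linarith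
    -- the set of left endpoints is {1, …, n}
    set S := Finset.image s Finset.univ with hSdef
    have hcardS : S.card = n := by
      rw [hSdef, Finset.card_image_of_injective _ hsinj, Finset.card_univ, Fintype.card_fin]
    have h0S : 0 ∉ S := by
      rw [hSdef]
      intro h
      obtain ⟨i, _, hi⟩ := Finset.mem_image.mp h
      have := hsmem i
      omega
    have hsumS : ∑ x ∈ S, x = ∑ i, s i :=
      Finset.sum_image (fun i _ j _ h => hsinj h)
    have hS : S = Finset.Icc 1 n := by
      apply min_sum_set n S hcardS h0S
      rw [hsumS, key]
    have hs_bounds : ∀ i, 1 ≤ s i ∧ s i ≤ n := by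
      intro i
      have : s i ∈ S := Finset.mem_image_of_mem s (Finset.mem_univ i)
      rw [hS] at this
      exact Finset.mem_Icc.mp this
    -- right endpoints avoid left endpoints
    have hdisj : ∀ i j, t i ≠ s j := by
      intro i j h
      have h1 : s j ∈ Multiset.map s Finset.univ.val :=
        Multiset.mem_map_of_mem s (Finset.mem_val.mpr (Finset.mem_univ j))
      have h2 : s j ∈ Multiset.map t Finset.univ.val := by
        rw [← h]
        exact Multiset.mem_map_of_mem t (Finset.mem_val.mpr (Finset.mem_univ i))
      have hcount : (Multiset.map (· + 1) (Multiset.range (2 * n))).count (s j) ≤ 1 :=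
        Multiset.nodup_iff_count_le_one.mp hnodupM _
      rw [← hM, Multiset.count_add] at hcount
      have c1 := Multiset.one_le_count_iff_mem.mpr h1
      have c2 := Multiset.one_le_count_iff_mem.mpr h2
      omega
    have ht_bounds : ∀ i, n + 1 ≤ t i ∧ t i ≤ 2 * n := by
      intro i
      refine ⟨?_, (htmem i).2⟩
      by_contra hlt
      have hti : t i ∈ Finset.Icc 1 n := Finset.mem_Icc.mpr ⟨(htmem i).1, by omega⟩
      rw [← hS, hSdef] at hti
      obtain ⟨j, _, hj⟩ := Finset.mem_image.mp hti
      exact hdisj i j hj.symm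
    -- build the permutation
    have hσlt : ∀ i, s i - 1 < n := fun i => by have := hs_bounds i; omega
    have hτlt : ∀ i, t i - n - 1 < n := fun i => by have := ht_bounds i; omega
    set σ : Fin n → Fin n := fun i => ⟨s i - 1, hσlt i⟩ with hσdef
    set τ : Fin n → Fin n := fun i => ⟨t i - n - 1, hτlt i⟩ with hτdef
    have hσinj : Function.Injective σ := by
      intro i j h
      apply hsinj
      have h' : s i - 1 = s j - 1 := congrArg Fin.val h
      have hi := hs_bounds i; have hj := hs_bounds j
      omega
    have hτinj : Function.Injective τ := by
      intro i j h
      apply htinj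
      have h' : t i - n - 1 = t j - n - 1 := congrArg Fin.val h
      have hi := ht_bounds i; have hj := ht_bounds j
      omega
    set e := Equiv.ofBijective σ (Finite.injective_iff_bijective.mp hσinj) with hedef
    set eτ := Equiv.ofBijective τ (Finite.injective_iff_bijective.mp hτinj) with heτdef
    refine ⟨e.symm.trans eτ, ?_⟩
    intro k hk1 hk2
    have hπσ : ∀ i, (e.symm.trans eτ) (σ i) = τ i := by
      intro i
      show eτ (e.symm (σ i)) = τ i
      rw [show σ i = e i from rfl, Equiv.symm_apply_apply]
      rfl
    have hPσ : ∀ i : Fin n,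
        (((σ i : ℕ) : ℤ) - ((τ i : ℕ) : ℤ) = (n : ℤ) - (k : ℤ)) ↔ a i = k := by
      intro i
      have hb := hs_bounds i
      have hbt := ht_bounds i
      have hti := hts i
      show (((s i - 1 : ℕ) : ℤ) - ((t i - n - 1 : ℕ) : ℤ) = (n : ℤ) - (k : ℤ)) ↔ a i = k
      omega
    have hcardeq : diagXray n (e.symm.trans eτ) k =
        (Finset.univ.filter fun i => a i = k).card := by
      unfold diagXray
      apply Finset.card_bij (fun j _ => e.symm j)
      · intro j hj
        rw [Finset.mem_filter] at hj ⊢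
        refine ⟨Finset.mem_univ _, ?_⟩
        have hj2 := hj.2
        have hje : j = σ (e.symm j) := (e.apply_symm_apply j).symm
        rw [hje, hπσ] at hj2
        exact (hPσ (e.symm j)).mp hj2
      · intro x _ y _ h
        exact e.symm.injective h
      · intro i hi
        rw [Finset.mem_filter] at hi
        refine ⟨e i, ?_, by simp⟩
        rw [Finset.mem_filter]
        refine ⟨Finset.mem_univ _, ?_⟩
        rw [show e i = σ i from rfl, hπσ]
        exact (hPσ i).mpr hi.2
    rw [hcardeq]
    by_cases h : ∃ i, a i = k
    · obtain ⟨i₀, hi₀⟩ := h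
      rw [if_pos ⟨i₀, hi₀⟩]
      have : Finset.univ.filter (fun i => a i = k) = {i₀} := by
        ext x
        simp only [Finset.mem_filter, Finset.mem_univ, true_and, Finset.mem_singleton]
        constructor
        · intro hx; exact ha_inj (hx.trans hi₀.symm)
        · rintro rfl; exact hi₀
      rw [this, Finset.card_singleton]
    · rw [if_neg h, Finset.card_eq_zero, Finset.filter_eq_empty_iff]
      intro x _
      exact fun hx => h ⟨x, hx⟩
  · -- backward: permutation → Skolem partition
    rintro ⟨π, hd⟩
    set F : Fin n → ℕ := fun i => n + (π i : ℕ) - (i : ℕ) with hFdef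
    have hFrange : ∀ i, F i ∈ Finset.Icc 1 (2 * n - 1) := by
      intro i
      have h1 := i.isLt
      have h2 := (π i).isLt
      simp only [hFdef, Finset.mem_Icc]
      omega
    have hfilter : ∀ k : ℕ,
        (Finset.univ.filter fun i : Fin n =>
          ((i : ℕ) : ℤ) - ((π i : ℕ) : ℤ) = (n : ℤ) - (k : ℤ)) =
        Finset.univ.filter fun i => F i = k := fun k => filter_shift n k π
    have hfib : n = ∑ k ∈ Finset.Icc 1 (2 * n - 1),
        (Finset.univ.filter fun i => F i = k).card := by
      have := Finset.card_eq_sum_card_fiberwise (fun i (_ : i ∈ Finset.univ) => hFrange i)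
      simpa using this
    have hsum_ind : n = ∑ k ∈ Finset.Icc 1 (2 * n - 1),
        (if ∃ i, a i = k then 1 else 0) := by
      refine hfib.trans (Finset.sum_congr rfl ?_)
      intro k hk
      obtain ⟨hk1, hk2⟩ := Finset.mem_Icc.mp hk
      rw [← hfilter k]
      exact hd k hk1 hk2
    have hBcard : ((Finset.Icc 1 (2 * n - 1)).filter fun k => ∃ i, a i = k).card = n := by
      rw [Finset.card_filter]
      exact hsum_ind.symm
    have hAcard : (Finset.image a Finset.univ).card = n := by
      rw [Finset.card_image_of_injective _ ha_inj, Finset.card_univ, Fintype.card_fin]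
    have hBsub : ((Finset.Icc 1 (2 * n - 1)).filter fun k => ∃ i, a i = k) ⊆
        Finset.image a Finset.univ := by
      intro k hk
      obtain ⟨i, hi⟩ := (Finset.mem_filter.mp hk).2
      exact Finset.mem_image.mpr ⟨i, Finset.mem_univ i, hi⟩
    have hBeq : ((Finset.Icc 1 (2 * n - 1)).filter fun k => ∃ i, a i = k) =
        Finset.image a Finset.univ :=
      Finset.eq_of_subset_of_card_le hBsub (by rw [hAcard, hBcard])
    have ha_bounds : ∀ i, a i ≤ 2 * n - 1 := by
      intro i
      have : a i ∈ Finset.image a Finset.univ :=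
        Finset.mem_image_of_mem a (Finset.mem_univ i)
      rw [← hBeq] at this
      exact (Finset.mem_Icc.mp (Finset.mem_filter.mp this).1).2
    have hone : ∀ i, (Finset.univ.filter fun j => F j = a i).card = 1 := by
      intro i
      have h1 := hd (a i) (ha_pos i) (ha_bounds i)
      unfold diagXray at h1
      rw [hfilter (a i), if_pos ⟨i, rfl⟩] at h1
      exact h1
    have hexu : ∀ i, ∃ j, (Finset.univ.filter fun j => F j = a i) = {j} :=
      fun i => Finset.card_eq_one.mp (hone i)
    choose σ hσ using hexu
    have hFσ : ∀ i, F (σ i) = a i := by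
      intro i
      have hmem : σ i ∈ ({σ i} : Finset (Fin n)) := Finset.mem_singleton_self _
      rw [← hσ i] at hmem
      exact (Finset.mem_filter.mp hmem).2
    have hσinj : Function.Injective σ := by
      intro i j h
      apply ha_inj
      rw [← hFσ i, ← hFσ j, h]
    have hσbij := Finite.injective_iff_bijective.mp hσinj
    refine ⟨fun i => (σ i : ℕ) + 1, fun i => n + (π (σ i) : ℕ) + 1, ?_, ?_⟩
    · unfold IsPartitionOfIcc pairsMultiset
      rw [bind_pair]
      have e1 : Multiset.map (fun i => (σ i : ℕ) + 1) Finset.univ.val =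
          Multiset.map (fun m => m + 1) (Multiset.range n) := by
        rw [← map_val_univ n, Multiset.map_map]
        exact map_univ_comp_perm (Equiv.ofBijective σ hσbij) (fun j => (j : ℕ) + 1)
      have e2 : Multiset.map (fun i => n + (π (σ i) : ℕ) + 1) Finset.univ.val =
          Multiset.map (fun m => n + m + 1) (Multiset.range n) := by
        rw [← map_val_univ n, Multiset.map_map]
        exact map_univ_comp_perm ((Equiv.ofBijective σ hσbij).trans π)
          (fun j => n + (j : ℕ) + 1)
      rw [e1, e2, two_blocks]
    · intro i
      have h1 := hFσ i
      have h2 := (σ i).isLt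
      have h3 := (π (σ i)).isLt
      simp only [hFdef] at h1
      show n + (π (σ i) : ℕ) + 1 = (σ i : ℕ) + 1 + a i
      omega
end

section
/- Let n be a positive integer and let A = {a_1, a_2, …, a_n} be a multiset of positive integers with a_1 + a_2 + … + a_n = n². Then the number of partitions of {1, 2, …, 2n} into n pairs (s_i, t_i) with s_i < t_i whose differences t_i − s_i form the multiset A equals the number of permutations π of {1, …, n} such that for every k ∈ {1, …, 2n−1} the entry d_k of the diagonal X-ray d(π) equals the multiplicity of k in A. -/
/-- The partitions of `{1, …, 2n}` into `n` pairs `(s, t)` with `s < t` whose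
differences `t - s` form the multiset `A`.  A partition is encoded as the finset
of its pairs, each pair written with the smaller element first. -/
def skolemPartitions (n : ℕ) (A : Multiset ℕ) : Set (Finset (ℕ × ℕ)) :=
  {P | (∀ p ∈ P, p.1 < p.2) ∧
    P.val.bind (fun p => {p.1, p.2}) = Multiset.map (· + 1) (Multiset.range (2 * n)) ∧
    P.val.map (fun p => p.2 - p.1) = A}



open Multiset

section Helpers

/-- bind of pair-multisets splits into two maps. -/
lemma sk_bind_pair {α : Type*} (s : Multiset α) (f g : α → ℕ) :
    s.bind (fun p => {f p, g p}) = s.map f + s.map g := by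
  induction s using Multiset.induction_on with
  | empty => simp
  | cons a s ih =>
    rw [Multiset.cons_bind, ih, Multiset.map_cons, Multiset.map_cons,
      Multiset.insert_eq_cons]
    simp only [← Multiset.singleton_add]
    abel

lemma sk_univ_val_map (n : ℕ) :
    ((Finset.univ : Finset (Fin n)).val.map Fin.val) = Multiset.range n := by
  have h2 := congrArg Finset.val (Fin.map_valEmbedding_univ (n := n))
  rw [Finset.map_val] at h2
  simpa [Nat.Iio_eq_range] using h2

lemma sk_perm_map (n : ℕ) (π : Equiv.Perm (Fin n)) (g : Fin n → ℕ) :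
    (Finset.univ : Finset (Fin n)).val.map (fun i => g (π i)) =
      (Finset.univ : Finset (Fin n)).val.map g := by
  have h2 := congrArg Finset.val (Finset.map_univ_equiv π)
  simp only [Finset.map_val] at h2
  conv_rhs => rw [← h2]
  rw [Multiset.map_map]
  rfl

lemma sk_card_filter_mem (M : Multiset ℕ) (F : Finset ℕ) :
    Multiset.card (M.filter (· ∈ F)) = ∑ k ∈ F, M.count k := by
  induction M using Multiset.induction_on with
  | empty => simp
  | cons a M ih =>
    rw [Multiset.filter_cons]
    by_cases h : a ∈ F
    · simp only [h, if_pos, Multiset.count_cons, Finset.sum_add_distrib, ← ih]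
      rw [Finset.sum_ite_eq' F a (fun _ => 1)]
      simp [h]
    · simp only [h, if_neg, not_false_iff, Multiset.count_cons, Finset.sum_add_distrib, ← ih]
      rw [Finset.sum_ite_eq' F a (fun _ => 1)]
      simp [h]

/-- minimal sum of distinct positive integers -/
lemma sk_sum_min : ∀ (N : ℕ) (S : Multiset ℕ), S.Nodup → (∀ x ∈ S, 1 ≤ x) →
    Multiset.card S = N → N * (N + 1) ≤ 2 * S.sum := by
  intro N
  induction N with
  | zero => intro S _ _ _; simp
  | succ N ih =>
    intro S hnd hpos hcard
    have hne : S.toFinset.Nonempty := by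
      rw [Multiset.toFinset_nonempty]
      intro h; rw [h] at hcard; simp at hcard
    obtain ⟨m, hmmem, hmax⟩ := S.toFinset.exists_max_image id hne
    simp only [id] at hmax
    rw [Multiset.mem_toFinset] at hmmem
    have hm : N + 1 ≤ m := by
      have hsub : S.toFinset ⊆ Finset.Icc 1 m := by
        intro x hx
        rw [Multiset.mem_toFinset] at hx
        exact Finset.mem_Icc.mpr ⟨hpos x hx, hmax x (Multiset.mem_toFinset.mpr hx)⟩
      have := Finset.card_le_card hsub
      rw [Multiset.toFinset_card_of_nodup hnd, hcard, Nat.card_Icc] at this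
      omega
    have hcons : S = m ::ₘ S.erase m := (Multiset.cons_erase hmmem).symm
    have hcard' : Multiset.card (S.erase m) = N := by
      have := congrArg Multiset.card hcons
      simp at this; omega
    have hle := ih (S.erase m) (hnd.erase m)
      (fun x hx => hpos x (Multiset.mem_of_mem_erase hx)) hcard'
    have hsum : S.sum = m + (S.erase m).sum := by
      conv_lhs => rw [hcons]
      simp
    nlinarith

lemma sk_sum_eq : ∀ (N : ℕ) (S : Multiset ℕ), S.Nodup → (∀ x ∈ S, 1 ≤ x) →
    Multiset.card S = N → 2 * S.sum = N * (N + 1) →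
    S = (Multiset.range N).map (· + 1) := by
  intro N
  induction N with
  | zero => intro S _ _ hcard _; simpa using Multiset.card_eq_zero.mp hcard
  | succ N ih =>
    intro S hnd hpos hcard hsum
    have hne : S.toFinset.Nonempty := by
      rw [Multiset.toFinset_nonempty]
      intro h; rw [h] at hcard; simp at hcard
    obtain ⟨m, hmmem, hmax⟩ := S.toFinset.exists_max_image id hne
    simp only [id] at hmax
    rw [Multiset.mem_toFinset] at hmmem
    have hm : N + 1 ≤ m := by
      have hsub : S.toFinset ⊆ Finset.Icc 1 m := by
        intro x hx
        rw [Multiset.mem_toFinset] at hx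
        exact Finset.mem_Icc.mpr ⟨hpos x hx, hmax x (Multiset.mem_toFinset.mpr hx)⟩
      have := Finset.card_le_card hsub
      rw [Multiset.toFinset_card_of_nodup hnd, hcard, Nat.card_Icc] at this
      omega
    have hcons : S = m ::ₘ S.erase m := (Multiset.cons_erase hmmem).symm
    have hcard' : Multiset.card (S.erase m) = N := by
      have := congrArg Multiset.card hcons
      simp at this; omega
    have hposE : ∀ x ∈ S.erase m, 1 ≤ x :=
      fun x hx => hpos x (Multiset.mem_of_mem_erase hx)
    have hle := sk_sum_min N (S.erase m) (hnd.erase m) hposE hcard'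
    have hsumS : S.sum = m + (S.erase m).sum := by
      conv_lhs => rw [hcons]
      simp
    have hmeq : m = N + 1 := by nlinarith
    have hsumE : 2 * (S.erase m).sum = N * (N + 1) := by nlinarith
    have hE := ih (S.erase m) (hnd.erase m) hposE hcard' hsumE
    rw [hcons, hE, hmeq, Multiset.range_succ, Multiset.map_cons]

end Helpers

section Bijection

/-- the pair associated to `i` by a permutation -/
def skPairEmb (n : ℕ) (π : Equiv.Perm (Fin n)) : Fin n ↪ ℕ × ℕ :=
  ⟨fun i => ((i : ℕ) + 1, n + (π i : ℕ) + 1), by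
    intro i j h
    have := congrArg Prod.fst h
    simp only at this
    exact Fin.val_injective (by omega)⟩

lemma skPairEmb_apply (n : ℕ) (π : Equiv.Perm (Fin n)) (i : Fin n) :
    skPairEmb n π i = ((i : ℕ) + 1, n + (π i : ℕ) + 1) := rfl

/-- the partition associated to a permutation -/
def skPhi (n : ℕ) (π : Equiv.Perm (Fin n)) : Finset (ℕ × ℕ) :=
  Finset.map (skPairEmb n π) Finset.univ

/-- the multiset of diagonal positions of a permutation -/
def skD (n : ℕ) (π : Equiv.Perm (Fin n)) : Multiset ℕ :=
  (Finset.univ : Finset (Fin n)).val.map (fun i => n + (π i : ℕ) - (i : ℕ))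

lemma skPhi_val (n : ℕ) (π : Equiv.Perm (Fin n)) :
    (skPhi n π).val = (Finset.univ : Finset (Fin n)).val.map
      (fun i : Fin n => ((i : ℕ) + 1, n + (π i : ℕ) + 1)) := by
  rw [skPhi, Finset.map_val]
  rfl

lemma skPhi_cover (n : ℕ) (π : Equiv.Perm (Fin n)) :
    (skPhi n π).val.bind (fun p => {p.1, p.2}) =
      Multiset.map (· + 1) (Multiset.range (2 * n)) := by
  rw [skPhi_val]
  rw [show ((Finset.univ : Finset (Fin n)).val.map
      (fun i : Fin n => ((i : ℕ) + 1, n + (π i : ℕ) + 1))).bind (fun p => {p.1, p.2})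
      = (Finset.univ : Finset (Fin n)).val.bind
        (fun i : Fin n => ({(i : ℕ) + 1, n + (π i : ℕ) + 1} : Multiset ℕ)) by
    rw [Multiset.bind_map]]
  rw [sk_bind_pair]
  rw [sk_perm_map n π (fun j => n + (j : ℕ) + 1)]
  rw [two_mul, Multiset.range_add, Multiset.map_add, Multiset.map_map]
  congr 1
  · rw [show (Finset.univ : Finset (Fin n)).val.map (fun i : Fin n => (i : ℕ) + 1)
        = ((Finset.univ : Finset (Fin n)).val.map Fin.val).map (· + 1) by
      rw [Multiset.map_map]; rfl]
    rw [sk_univ_val_map]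
  · rw [show (Finset.univ : Finset (Fin n)).val.map (fun i : Fin n => n + (i : ℕ) + 1)
        = ((Finset.univ : Finset (Fin n)).val.map Fin.val).map (fun x => n + x + 1) by
      rw [Multiset.map_map]; rfl]
    rw [sk_univ_val_map]
    rfl

lemma skPhi_diff (n : ℕ) (π : Equiv.Perm (Fin n)) :
    (skPhi n π).val.map (fun p => p.2 - p.1) = skD n π := by
  rw [skPhi_val, Multiset.map_map, skD]
  apply Multiset.map_congr rfl
  intro i _
  simp only [Function.comp]
  omega

lemma skD_count (n : ℕ) (π : Equiv.Perm (Fin n)) (k : ℕ) :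
    (skD n π).count k = diagXray n π (k : ℤ) := by
  rw [skD, Multiset.count_map, diagXray, Finset.card_def, Finset.filter_val]
  congr 1
  apply Multiset.filter_congr
  intro i _
  have h1 : (i : ℕ) < n := i.isLt
  constructor
  · intro h; push_cast; omega
  · intro h
    have : ((i : ℕ) : ℤ) - ((π i : ℕ) : ℤ) = (n : ℤ) - (k : ℤ) := h
    omega

lemma skD_card (n : ℕ) (π : Equiv.Perm (Fin n)) : Multiset.card (skD n π) = n := by
  simp [skD]

lemma skD_mem (n : ℕ) (π : Equiv.Perm (Fin n)) :
    ∀ x ∈ skD n π, 1 ≤ x ∧ x ≤ 2 * n - 1 := by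
  intro x hx
  rw [skD, Multiset.mem_map] at hx
  obtain ⟨i, _, hi⟩ := hx
  have h1 : (i : ℕ) < n := i.isLt
  have h2 : (π i : ℕ) < n := (π i).isLt
  omega

lemma skPhi_inj (n : ℕ) : Function.Injective (skPhi n) := by
  intro π σ h
  ext i
  have hmem : ((i : ℕ) + 1, n + (π i : ℕ) + 1) ∈ skPhi n σ := by
    rw [← h, skPhi, Finset.mem_map]
    exact ⟨i, Finset.mem_univ i, rfl⟩
  rw [skPhi, Finset.mem_map] at hmem
  obtain ⟨j, _, hj⟩ := hmem
  simp only [skPairEmb_apply, Prod.mk.injEq] at hj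
  have hij : (j : ℕ) = (i : ℕ) := by omega
  have : j = i := Fin.val_injective hij
  subst this
  omega

end Bijection

theorem stmt2 (n : ℕ) (hn : 0 < n) (a : Fin n → ℕ)
    (ha_pos : ∀ i, 0 < a i) (ha_sum : ∑ i, a i = n ^ 2) :
    (skolemPartitions n (Multiset.map a (Finset.univ : Finset (Fin n)).val)).ncard =
      {π : Equiv.Perm (Fin n) | ∀ k : ℕ, 1 ≤ k → k ≤ 2 * n - 1 →
        diagXray n π k =
          Multiset.count k (Multiset.map a (Finset.univ : Finset (Fin n)).val)}.ncard := by
  classical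
  set A : Multiset ℕ := Multiset.map a (Finset.univ : Finset (Fin n)).val with hA
  set S₂ : Set (Equiv.Perm (Fin n)) := {π : Equiv.Perm (Fin n) | ∀ k : ℕ, 1 ≤ k → k ≤ 2 * n - 1 →
    diagXray n π k = Multiset.count k A} with hS2
  have hcardA : Multiset.card A = n := by simp [hA]
  have hAsum : A.sum = n ^ 2 := by
    rw [hA, ← Finset.sum_eq_multiset_sum]; exact ha_sum
  have key1 : ∀ π ∈ S₂, skD n π = A := by
    intro π hπ
    have hcount : ∀ k ∈ Finset.Icc 1 (2 * n - 1), (skD n π).count k = A.count k := by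
      intro k hk
      rw [Finset.mem_Icc] at hk
      rw [skD_count]; exact hπ k hk.1 hk.2
    have hDfilter : (skD n π).filter (· ∈ Finset.Icc 1 (2 * n - 1)) = skD n π :=
      Multiset.filter_eq_self.mpr (fun x hx => Finset.mem_Icc.mpr (skD_mem n π x hx))
    have hAcard : Multiset.card (A.filter (· ∈ Finset.Icc 1 (2 * n - 1))) = n := by
      rw [sk_card_filter_mem, ← Finset.sum_congr rfl hcount, ← sk_card_filter_mem,
        hDfilter, skD_card]
    have hAfilter : A.filter (· ∈ Finset.Icc 1 (2 * n - 1)) = A :=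
      Multiset.eq_of_le_of_card_le (Multiset.filter_le _ _) (by rw [hAcard, hcardA])
    ext k
    by_cases hk : k ∈ Finset.Icc 1 (2 * n - 1)
    · exact hcount k hk
    · rw [Multiset.count_eq_zero.mpr, Multiset.count_eq_zero.mpr]
      · intro hmem
        rw [← hAfilter] at hmem
        exact hk (Multiset.mem_filter.mp hmem).2
      · intro hmem
        exact hk (Finset.mem_Icc.mpr (skD_mem n π k hmem))
  have key2 : ∀ π : Equiv.Perm (Fin n), skD n π = A → π ∈ S₂ := by
    intro π h k _ _
    rw [← skD_count n π k, h]
  have keyPhi : ∀ π ∈ S₂, skPhi n π ∈ skolemPartitions n A := by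
    intro π hπ
    refine ⟨?_, skPhi_cover n π, ?_⟩
    · intro q hq
      rw [skPhi, Finset.mem_map] at hq
      obtain ⟨i, _, hi⟩ := hq
      rw [← hi]
      simp only [skPairEmb_apply]
      have := i.isLt
      omega
    · rw [skPhi_diff]; exact key1 π hπ
  have keySurj : ∀ P ∈ skolemPartitions n A, ∃ π ∈ S₂, skPhi n π = P := by
    intro P hP
    obtain ⟨hlt, hcov, hdiff⟩ := hP
    have hcardP : Multiset.card P.val = n := by
      have := congrArg Multiset.card hdiff
      rwa [Multiset.card_map, hcardA] at this
    have hnodB : (P.val.bind (fun q => {q.1, q.2})).Nodup := by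
      rw [hcov]
      exact (Multiset.nodup_range (2 * n)).map (fun x y h => by omega)
    have hbindsplit : P.val.bind (fun q => {q.1, q.2}) =
        P.val.map Prod.fst + P.val.map Prod.snd := sk_bind_pair P.val Prod.fst Prod.snd
    set S := P.val.map Prod.fst with hS
    set T := P.val.map Prod.snd with hT
    have hST : S + T = Multiset.map (· + 1) (Multiset.range (2 * n)) := by
      rw [← hbindsplit, hcov]
    have hSTnd : (S + T).Nodup := by rw [← hbindsplit]; exact hnodB
    have hSnd : S.Nodup := Multiset.nodup_of_le (Multiset.le_add_right _ _) hSTnd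
    have hSpos : ∀ x ∈ S, 1 ≤ x := by
      intro x hx
      have hx2 : x ∈ S + T := Multiset.mem_add.mpr (Or.inl hx)
      rw [hST, Multiset.mem_map] at hx2
      obtain ⟨y, _, hy⟩ := hx2
      omega
    have hRS : 2 * (Multiset.map (· + 1) (Multiset.range (2 * n))).sum = 2 * n * (2 * n + 1) := by
      have h1 : (Multiset.map (· + 1) (Multiset.range (2 * n))).sum =
          ∑ i ∈ Finset.range (2 * n), (i + 1) := by
        rw [Finset.sum_eq_multiset_sum, Finset.range_val]
      rw [h1, Finset.sum_add_distrib, Finset.sum_const, Finset.card_range, smul_eq_mul, mul_one]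
      have h2 := Finset.sum_range_id_mul_two (2 * n)
      rcases n with _ | m
      · simp
      · have h3 : 2 * (m + 1) - 1 = 2 * m + 1 := by omega
        rw [h3] at h2
        nlinarith
    have hTsum : T.sum = S.sum + n ^ 2 := by
      have h1 : T = P.val.map (fun q => q.1 + (q.2 - q.1)) :=
        Multiset.map_congr rfl (fun q hq => by have := hlt q hq; omega)
      rw [h1, Multiset.sum_map_add, ← hS, hdiff, hAsum]
    have h2S : 2 * S.sum = n * (n + 1) := by
      have h3 := congrArg (fun M : Multiset ℕ => 2 * M.sum) hST
      simp only [Multiset.sum_add] at h3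
      rw [hRS] at h3
      nlinarith
    have hScard : Multiset.card S = n := by rw [hS, Multiset.card_map, hcardP]
    have hSeq : S = (Multiset.range n).map (· + 1) := sk_sum_eq n S hSnd hSpos hScard h2S
    have hTeq : T = (Multiset.range n).map (fun x => n + x + 1) := by
      have h3 : S + T = S + (Multiset.range n).map (fun x => n + x + 1) := by
        rw [hST, two_mul, Multiset.range_add, Multiset.map_add, Multiset.map_map, hSeq]
        rfl
      exact add_left_cancel h3
    have hfirst : ∀ i : Fin n, ∃ q, q ∈ P.val ∧ q.1 = (i : ℕ) + 1 := by
      intro i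
      have h4 : ((i : ℕ) + 1) ∈ S := by
        rw [hSeq, Multiset.mem_map]
        exact ⟨(i : ℕ), Multiset.mem_range.mpr i.isLt, rfl⟩
      rw [hS, Multiset.mem_map] at h4
      obtain ⟨q, hq, hq1⟩ := h4
      exact ⟨q, hq, hq1⟩
    choose p hpmem hp1 using hfirst
    have hsnd : ∀ i : Fin n, n + 1 ≤ (p i).2 ∧ (p i).2 ≤ 2 * n := by
      intro i
      have h5 : (p i).2 ∈ T := by
        rw [hT]
        exact Multiset.mem_map_of_mem _ (hpmem i)
      rw [hTeq, Multiset.mem_map] at h5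
      obtain ⟨x, hx, hx2⟩ := h5
      rw [Multiset.mem_range] at hx
      omega
    have hsecond_inj : ∀ i j : Fin n, (p i).2 = (p j).2 → p i = p j := by
      intro i j hequ
      by_contra hne
      have hji : p j ∈ P.val.erase (p i) :=
        (Multiset.mem_erase_of_ne (fun hc => hne hc.symm)).mpr (hpmem j)
      have hcons1 : P.val = p i ::ₘ P.val.erase (p i) := (Multiset.cons_erase (hpmem i)).symm
      have hc2 : P.val.erase (p i) = p j ::ₘ (P.val.erase (p i)).erase (p j) :=
        (Multiset.cons_erase hji).symm
      have h6 : 2 ≤ Multiset.count ((p i).2) (P.val.bind (fun q => {q.1, q.2})) := by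
        conv_rhs => rw [hcons1, hc2]
        rw [Multiset.cons_bind, Multiset.cons_bind, Multiset.count_add, Multiset.count_add]
        have e1 : 1 ≤ Multiset.count ((p i).2) ({(p i).1, (p i).2} : Multiset ℕ) :=
          Multiset.one_le_count_iff_mem.mpr (by simp)
        have e2 : 1 ≤ Multiset.count ((p i).2) ({(p j).1, (p j).2} : Multiset ℕ) :=
          Multiset.one_le_count_iff_mem.mpr (by simp [hequ])
        omega
      have h7 := Multiset.nodup_iff_count_le_one.mp hnodB ((p i).2)
      omega
    have hflt : ∀ i : Fin n, (p i).2 - (n + 1) < n := fun i => by have := hsnd i; omega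
    set f : Fin n → Fin n := fun i => ⟨(p i).2 - (n + 1), hflt i⟩ with hf
    have hfinj : Function.Injective f := by
      intro i j hij
      have h8 : (p i).2 = (p j).2 := by
        have hi := hsnd i; have hj := hsnd j
        have h9 := congrArg Fin.val hij
        simp only [hf] at h9
        omega
      have hpij := hsecond_inj i j h8
      have h10 : (i : ℕ) + 1 = (j : ℕ) + 1 := by rw [← hp1 i, ← hp1 j, hpij]
      exact Fin.val_injective (by omega)
    set π : Equiv.Perm (Fin n) := Equiv.ofBijective f (Finite.injective_iff_bijective.mp hfinj)
      with hπdef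
    have hπf : ∀ i, π i = f i := fun i => rfl
    have hPhiP : skPhi n π = P := by
      apply Finset.eq_of_subset_of_card_le
      · intro q hq
        rw [skPhi, Finset.mem_map] at hq
        obtain ⟨i, _, hi⟩ := hq
        have hq2 : q = ((i : ℕ) + 1, n + ((f i : ℕ)) + 1) := by
          rw [← hi]
          simp only [skPairEmb_apply]
          rw [hπf i]
        have hfi : n + ((f i : ℕ)) + 1 = (p i).2 := by
          simp only [hf]
          have := hsnd i
          omega
        have hq3 : q = p i := by
          rw [hq2, hfi, ← hp1 i]
        rw [hq3]
        exact hpmem i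
      · rw [skPhi, Finset.card_map, Finset.card_univ, Fintype.card_fin]
        exact le_of_eq hcardP
    have hDA : skD n π = A := by
      rw [← skPhi_diff, hPhiP]; exact hdiff
    exact ⟨π, key2 π hDA, hPhiP⟩
  have himg : skPhi n '' S₂ = skolemPartitions n A := by
    apply Set.Subset.antisymm
    · rintro P ⟨π, hπ, rfl⟩
      exact keyPhi π hπ
    · intro P hP
      obtain ⟨π, hπ, hPhiP⟩ := keySurj P hP
      exact ⟨π, hπ, hPhiP⟩
  rw [← himg, Set.ncard_image_of_injOn (Function.Injective.injOn (skPhi_inj n))]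
end

section
/- For every positive integer n, the set {1, 2, …, 2n} can be partitioned into n pairs (s_i, t_i) with t_i − s_i = i for i = 1, 2, …, n if and only if n ≡ 0 (mod 4) or n ≡ 1 (mod 4). -/
lemma pairsMultiset_eq (n : ℕ) (s t : Fin n → ℕ) :
    pairsMultiset n s t =
      Multiset.map s (Finset.univ : Finset (Fin n)).val +
        Multiset.map t (Finset.univ : Finset (Fin n)).val := by
  unfold pairsMultiset
  have h : ∀ i : Fin n, ({s i, t i} : Multiset ℕ) = {s i} + {t i} := fun i => rfl
  simp only [h]
  rw [Multiset.bind_add, Multiset.bind_singleton, Multiset.bind_singleton]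

lemma isPartition_of {n : ℕ} (s t : Fin n → ℕ)
    (ht : ∀ i, t i = s i + ((i : ℕ) + 1))
    (h1 : ∀ i, 1 ≤ s i) (h2 : ∀ i, t i ≤ 2 * n)
    (hss : ∀ i j, s i = s j → i = j)
    (htt : ∀ i j, t i = t j → i = j)
    (hst : ∀ i j, s i ≠ t j) :
    IsPartitionOfIcc n s t := by
  unfold IsPartitionOfIcc
  rw [pairsMultiset_eq]
  have hnodup : (Multiset.map s (Finset.univ : Finset (Fin n)).val +
      Multiset.map t (Finset.univ : Finset (Fin n)).val).Nodup := by
    rw [Multiset.nodup_add]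
    refine ⟨Multiset.Nodup.map_on (fun x _ y _ h => hss x y h) Finset.univ.nodup,
      Multiset.Nodup.map_on (fun x _ y _ h => htt x y h) Finset.univ.nodup, ?_⟩
    rw [Multiset.disjoint_left]
    intro a ha hb
    obtain ⟨i, _, rfl⟩ := Multiset.mem_map.1 ha
    obtain ⟨j, _, hj⟩ := Multiset.mem_map.1 hb
    exact hst i j hj.symm
  refine Multiset.eq_of_le_of_card_le ((Multiset.le_iff_subset hnodup).2 ?_) ?_
  · intro x hx
    have hx' : 1 ≤ x ∧ x ≤ 2 * n := by
      rcases Multiset.mem_add.1 hx with h | h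
      · obtain ⟨i, _, rfl⟩ := Multiset.mem_map.1 h
        have a1 := h1 i; have a2 := h2 i; have a3 := ht i
        omega
      · obtain ⟨i, _, rfl⟩ := Multiset.mem_map.1 h
        have a1 := h1 i; have a2 := h2 i; have a3 := ht i
        omega
    rw [Multiset.mem_map]
    exact ⟨x - 1, Multiset.mem_range.2 (by omega), by omega⟩
  · simp only [Multiset.card_map, Multiset.card_range, Multiset.card_add]
    simp [Finset.card_univ]
    omega

/-- construction for `n = 4*m`, as a function of the difference `d`. -/
def sk0 (m d : ℕ) : ℕ :=
  if d % 2 = 0 then 2*m + 1 - d/2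
  else if d = 1 then 7*m
  else if d = 4*m - 1 then 2*m + 1
  else if d < 2*m - 1 then (12*m + 1 - d)/2
  else if d = 2*m - 1 then 4*m + 2
  else (12*m + 3 - d)/2

/-- construction for `n = 4*m+1` (`m ≥ 2`), as a function of the difference `d`. -/
def sk1 (m d : ℕ) : ℕ :=
  if d % 2 = 0 then 2*m + 1 - d/2
  else if d = 1 then 7*m + 1
  else if d = 4*m + 1 then 2*m + 1
  else if d < 2*m - 1 then (12*m + 3 - d)/2
  else if d = 2*m - 1 then 4*m + 2
  else (12*m + 5 - d)/2

set_option maxHeartbeats 3200000 in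
lemma exists0 (m : ℕ) (hm : 1 ≤ m) :
    ∃ s t : Fin (4*m) → ℕ, IsPartitionOfIcc (4*m) s t ∧ ∀ i, t i = s i + ((i : ℕ) + 1) := by
  refine ⟨fun i => sk0 m ((i : ℕ) + 1), fun i => sk0 m ((i : ℕ) + 1) + ((i : ℕ) + 1),
    ?_, fun i => rfl⟩
  have hb : ∀ d, 1 ≤ d → d ≤ 4*m → 1 ≤ sk0 m d ∧ sk0 m d + d ≤ 2 * (4*m) := by
    intro d hd1 hd2
    unfold sk0
    split_ifs <;> omega
  have hinj : ∀ d e, 1 ≤ d → d ≤ 4*m → 1 ≤ e → e ≤ 4*m → d ≠ e →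
      sk0 m d ≠ sk0 m e := by
    intro d e hd1 hd2 he1 he2 hne
    unfold sk0
    split_ifs <;> omega
  have hst : ∀ d e, 1 ≤ d → d ≤ 4*m → 1 ≤ e → e ≤ 4*m →
      sk0 m d ≠ sk0 m e + e := by
    intro d e hd1 hd2 he1 he2
    unfold sk0
    split_ifs <;> omega
  have htt : ∀ d e, 1 ≤ d → d ≤ 4*m → 1 ≤ e → e ≤ 4*m → d ≠ e →
      sk0 m d + d ≠ sk0 m e + e := by
    intro d e hd1 hd2 he1 he2 hne
    unfold sk0
    split_ifs <;> omega
  apply isPartition_of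
  · intro i; rfl
  · intro i; have := i.isLt; exact (hb ((i : ℕ) + 1) (by omega) (by omega)).1
  · intro i; have := i.isLt; exact (hb ((i : ℕ) + 1) (by omega) (by omega)).2
  · intro i j h
    by_contra hne
    have hv : (i : ℕ) + 1 ≠ (j : ℕ) + 1 := by
      simp only [ne_eq, add_left_inj]
      exact fun hc => hne (Fin.ext hc)
    have hi := i.isLt; have hj := j.isLt
    exact hinj _ _ (by omega) (by omega) (by omega) (by omega) hv h
  · intro i j h
    by_contra hne
    have hv : (i : ℕ) + 1 ≠ (j : ℕ) + 1 := by
      simp only [ne_eq, add_left_inj]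
      exact fun hc => hne (Fin.ext hc)
    have hi := i.isLt; have hj := j.isLt
    exact htt _ _ (by omega) (by omega) (by omega) (by omega) hv h
  · intro i j
    have hi := i.isLt; have hj := j.isLt
    exact hst _ _ (by omega) (by omega) (by omega) (by omega)

set_option maxHeartbeats 3200000 in
lemma exists1 (m : ℕ) (hm : 2 ≤ m) :
    ∃ s t : Fin (4*m+1) → ℕ, IsPartitionOfIcc (4*m+1) s t ∧
      ∀ i, t i = s i + ((i : ℕ) + 1) := by
  refine ⟨fun i => sk1 m ((i : ℕ) + 1), fun i => sk1 m ((i : ℕ) + 1) + ((i : ℕ) + 1),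
    ?_, fun i => rfl⟩
  have hb : ∀ d, 1 ≤ d → d ≤ 4*m+1 → 1 ≤ sk1 m d ∧ sk1 m d + d ≤ 2 * (4*m+1) := by
    intro d hd1 hd2
    unfold sk1
    split_ifs <;> omega
  have hinj : ∀ d e, 1 ≤ d → d ≤ 4*m+1 → 1 ≤ e → e ≤ 4*m+1 → d ≠ e →
      sk1 m d ≠ sk1 m e := by
    intro d e hd1 hd2 he1 he2 hne
    unfold sk1
    split_ifs <;> omega
  have hst : ∀ d e, 1 ≤ d → d ≤ 4*m+1 → 1 ≤ e → e ≤ 4*m+1 →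
      sk1 m d ≠ sk1 m e + e := by
    intro d e hd1 hd2 he1 he2
    unfold sk1
    split_ifs <;> omega
  have htt : ∀ d e, 1 ≤ d → d ≤ 4*m+1 → 1 ≤ e → e ≤ 4*m+1 → d ≠ e →
      sk1 m d + d ≠ sk1 m e + e := by
    intro d e hd1 hd2 he1 he2 hne
    unfold sk1
    split_ifs <;> omega
  apply isPartition_of
  · intro i; rfl
  · intro i; have := i.isLt; exact (hb ((i : ℕ) + 1) (by omega) (by omega)).1
  · intro i; have := i.isLt; exact (hb ((i : ℕ) + 1) (by omega) (by omega)).2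
  · intro i j h
    by_contra hne
    have hv : (i : ℕ) + 1 ≠ (j : ℕ) + 1 := by
      simp only [ne_eq, add_left_inj]
      exact fun hc => hne (Fin.ext hc)
    have hi := i.isLt; have hj := j.isLt
    exact hinj _ _ (by omega) (by omega) (by omega) (by omega) hv h
  · intro i j h
    by_contra hne
    have hv : (i : ℕ) + 1 ≠ (j : ℕ) + 1 := by
      simp only [ne_eq, add_left_inj]
      exact fun hc => hne (Fin.ext hc)
    have hi := i.isLt; have hj := j.isLt
    exact htt _ _ (by omega) (by omega) (by omega) (by omega) hv h
  · intro i j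
    have hi := i.isLt; have hj := j.isLt
    exact hst _ _ (by omega) (by omega) (by omega) (by omega)

/-- explicit construction for `n = 5`. -/
def sk5 (d : ℕ) : ℕ :=
  if d = 1 then 9 else if d = 2 then 2 else if d = 3 then 5 else if d = 4 then 3 else 1

lemma two_mul_sum_range_succ (N : ℕ) :
    2 * ∑ i ∈ Finset.range N, (i + 1) = N * (N + 1) := by
  induction N with
  | zero => simp
  | succ k ih =>
    rw [Finset.sum_range_succ]
    calc 2 * (∑ i ∈ Finset.range k, (i + 1) + (k + 1))
        = 2 * ∑ i ∈ Finset.range k, (i + 1) + 2 * (k + 1) := by ring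
      _ = k * (k + 1) + 2 * (k + 1) := by rw [ih]
      _ = (k + 1) * (k + 1 + 1) := by ring

theorem stmt6 (n : ℕ) (hn : 0 < n) :
    (∃ s t : Fin n → ℕ, IsPartitionOfIcc n s t ∧ ∀ i, t i = s i + ((i : ℕ) + 1)) ↔
      n % 4 = 0 ∨ n % 4 = 1 := by
  constructor
  · rintro ⟨s, t, hpart, ht⟩
    have hsum := congrArg Multiset.sum hpart
    rw [pairsMultiset_eq, Multiset.sum_add] at hsum
    have hms : (Multiset.map s (Finset.univ : Finset (Fin n)).val).sum = ∑ i, s i :=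
      (Finset.sum_eq_multiset_sum _ _).symm
    have hmt : (Multiset.map t (Finset.univ : Finset (Fin n)).val).sum = ∑ i, t i :=
      (Finset.sum_eq_multiset_sum _ _).symm
    have hrhs : (Multiset.map (· + 1) (Multiset.range (2 * n))).sum
        = ∑ k ∈ Finset.range (2 * n), (k + 1) := by
      rw [Finset.sum_eq_multiset_sum, Finset.range_val]
    rw [hms, hmt, hrhs] at hsum
    have htsum : ∑ i, t i = ∑ i, s i + ∑ i : Fin n, ((i : ℕ) + 1) := by
      rw [← Finset.sum_add_distrib]
      exact Finset.sum_congr rfl fun i _ => ht i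
    rw [htsum] at hsum
    have hA : ∑ i : Fin n, ((i : ℕ) + 1) = ∑ i ∈ Finset.range n, (i + 1) :=
      Fin.sum_univ_eq_sum_range _ n
    rw [hA] at hsum
    set S := ∑ i, s i with hS
    set A := ∑ i ∈ Finset.range n, (i + 1) with hAdef
    set B := ∑ k ∈ Finset.range (2 * n), (k + 1) with hBdef
    have h2A : 2 * A = n * (n + 1) := two_mul_sum_range_succ n
    have h2B : 2 * B = 2 * n * (2 * n + 1) := two_mul_sum_range_succ (2 * n)
    by_contra hcon
    push_neg at hcon
    have hr : n % 4 = 2 ∨ n % 4 = 3 := by omega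
    rcases hr with hr | hr
    · obtain ⟨q, rfl⟩ : ∃ q, n = 4 * q + 2 := ⟨n / 4, by omega⟩
      obtain ⟨X, hX⟩ : ∃ X, (4*q+2) * ((4*q+2) + 1) = 4 * X + 2 :=
        ⟨4*q*q + 5*q + 1, by ring⟩
      obtain ⟨Y, hY⟩ : ∃ Y, 2 * (4*q+2) * (2 * (4*q+2) + 1) = 4 * Y + 4 :=
        ⟨16*q*q + 18*q + 4, by ring⟩
      rw [hX] at h2A; rw [hY] at h2B
      omega
    · obtain ⟨q, rfl⟩ : ∃ q, n = 4 * q + 3 := ⟨n / 4, by omega⟩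
      obtain ⟨X, hX⟩ : ∃ X, (4*q+3) * ((4*q+3) + 1) = 4 * X :=
        ⟨(4*q+3)*(q+1), by ring⟩
      obtain ⟨Y, hY⟩ : ∃ Y, 2 * (4*q+3) * (2 * (4*q+3) + 1) = 4 * Y + 2 :=
        ⟨16*q*q + 26*q + 10, by ring⟩
      rw [hX] at h2A; rw [hY] at h2B
      omega
  · intro h
    rcases h with h | h
    · obtain ⟨m, rfl⟩ : ∃ m, n = 4 * m := ⟨n / 4, by omega⟩
      exact exists0 m (by omega)
    · rcases eq_or_ne n 1 with rfl | h1
      · refine ⟨fun _ => 1, fun _ => 2, ?_, ?_⟩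
        · unfold IsPartitionOfIcc pairsMultiset; decide
        · decide
      rcases eq_or_ne n 5 with rfl | h5
      · refine ⟨fun i => sk5 ((i : ℕ) + 1), fun i => sk5 ((i : ℕ) + 1) + ((i : ℕ) + 1),
          ?_, ?_⟩
        · unfold IsPartitionOfIcc pairsMultiset; decide
        · decide
      obtain ⟨m, rfl⟩ : ∃ m, n = 4 * m + 1 := ⟨n / 4, by omega⟩
      exact exists1 m (by omega)
end

section
/- The set {1, 2, …, 12} cannot be partitioned into 6 pairs (s_i, t_i) with s_i < t_i whose differences t_i − s_i form the multiset {4, 4, 4, 8, 8, 8}, even though this multiset has sum 36 = 6², an even number of even elements, and satisfies the density conditions: for the nondecreasing arrangement a_1 ≤ … ≤ a_6 = (4, 4, 4, 8, 8, 8), one has a_m + a_{m+1} + … + a_6 ≤ 36 − (m−1)² for each m = 1, …, 6. Hence the multiset {4, 4, 4, 8, 8, 8} is not an extremal multi Skolem set. -/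
/-- The multiset `{4, 4, 4, 8, 8, 8}`, given by its nondecreasing arrangement. -/
def a8 : Fin 6 → ℕ := ![4, 4, 4, 8, 8, 8]

theorem stmt8 :
    (∑ i, a8 i = 36) ∧
      Even (Finset.univ.filter fun i => Even (a8 i)).card ∧
      (∀ m : Fin 6, ∑ i ∈ Finset.univ.filter (fun i => m ≤ i), a8 i ≤ 36 - (m : ℕ) ^ 2) ∧
      ¬ ∃ s t : Fin 6 → ℕ, IsPartitionOfIcc 6 s t ∧ (∀ i, s i < t i) ∧
        Multiset.map (fun i => t i - s i) (Finset.univ : Finset (Fin 6)).val =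
          Multiset.map a8 (Finset.univ : Finset (Fin 6)).val := by
  refine ⟨by decide, by decide, by decide, ?_⟩
  rintro ⟨s, t, hpart, hlt, hdiff⟩
  have hd4 : ∀ i, (t i - s i) % 4 = 0 := by
    intro i
    have hm : t i - s i ∈ Multiset.map a8 (Finset.univ : Finset (Fin 6)).val := by
      rw [← hdiff]; exact Multiset.mem_map_of_mem _ (Finset.mem_univ i)
    obtain ⟨j, -, hj⟩ := Multiset.mem_map.mp hm
    rw [← hj]; fin_cases j <;> decide
  have hst : ∀ i, (t i % 4 = 1) ↔ (s i % 4 = 1) := by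
    intro i; have h1 := hlt i; have h2 := hd4 i; omega
  have epair : ∀ i : Fin 6,
      Multiset.countP (fun x => x % 4 = 1) ({s i, t i} : Multiset ℕ) % 2 = 0 := by
    intro i
    rw [show ({s i, t i} : Multiset ℕ) = s i ::ₘ t i ::ₘ 0 from rfl,
      Multiset.countP_cons, Multiset.countP_cons, Multiset.countP_zero]
    have h := hst i
    split_ifs with h1 h2 h2 <;> simp_all
  have key : (pairsMultiset 6 s t).countP (fun x => x % 4 = 1) % 2 = 0 := by
    have hrw : pairsMultiset 6 s t =
        {s 0, t 0} + {s 1, t 1} + {s 2, t 2} + {s 3, t 3} + {s 4, t 4} + {s 5, t 5} := rfl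
    rw [hrw]
    simp only [Multiset.countP_add]
    have e0 := epair 0; have e1 := epair 1; have e2 := epair 2
    have e3 := epair 3; have e4 := epair 4; have e5 := epair 5
    omega
  rw [hpart] at key
  have : (Multiset.map (· + 1) (Multiset.range (2 * 6))).countP (fun x => x % 4 = 1) = 3 := by
    decide
  omega
end

section
/- Let A = {a_1, a_2, …, a_n} be a multi Skolem set with its elements arranged in nondecreasing order a_1 ≤ a_2 ≤ … ≤ a_n. Then for each m with 1 ≤ m ≤ n, one has a_m + a_{m+1} + … + a_n ≤ n² − (m−1)². -/
open Finset

/-- Sum of a finset of naturals all ≤ N is at most the top `card` values. -/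
lemma sumUpper (T : Finset ℕ) : ∀ N : ℕ, (∀ x ∈ T, x ≤ N) →
    ∑ x ∈ T, x ≤ ∑ j ∈ Finset.range T.card, (N - j) := by
  induction T using Finset.induction_on_max with
  | empty => simp
  | insert b T hb ih =>
    intro N h
    have hbT : b ∉ T := fun hx => lt_irrefl b (hb b hx)
    rw [Finset.sum_insert hbT, Finset.card_insert_of_notMem hbT,
      Finset.sum_range_succ']
    have h1 : ∑ x ∈ T, x ≤ ∑ j ∈ Finset.range T.card, (N - 1 - j) := by
      refine ih (N - 1) fun x hx => ?_
      have h2 := hb x hx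
      have h3 := h b (Finset.mem_insert_self _ _)
      omega
    have h4 : ∑ j ∈ Finset.range T.card, (N - 1 - j)
        = ∑ j ∈ Finset.range T.card, (N - (j + 1)) := by
      refine Finset.sum_congr rfl fun j _ => by omega
    have h5 : b ≤ N - 0 := by have := h b (Finset.mem_insert_self _ _); omega
    omega

/-- Sum of a finset of naturals all ≥ L is at least the bottom `card` values. -/
lemma sumLower (T : Finset ℕ) : ∀ L : ℕ, (∀ x ∈ T, L ≤ x) →
    ∑ j ∈ Finset.range T.card, (L + j) ≤ ∑ x ∈ T, x := by
  induction T using Finset.induction_on_min with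
  | empty => simp
  | insert b T hb ih =>
    intro L h
    have hbT : b ∉ T := fun hx => lt_irrefl b (hb b hx)
    rw [Finset.sum_insert hbT, Finset.card_insert_of_notMem hbT,
      Finset.sum_range_succ']
    have hbL : L ≤ b := h b (Finset.mem_insert_self _ _)
    have h1 : ∑ j ∈ Finset.range T.card, (b + 1 + j) ≤ ∑ x ∈ T, x :=
      ih (b + 1) fun x hx => hb x hx
    have h4 : ∑ j ∈ Finset.range T.card, (L + (j + 1))
        ≤ ∑ j ∈ Finset.range T.card, (b + 1 + j) := by
      refine Finset.sum_le_sum fun j _ => by omega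
    omega

lemma keySum (n : ℕ) : ∀ k ≤ n, ∑ j ∈ Finset.range k, (2 * n - j)
    = (n ^ 2 - (n - k) ^ 2) + ∑ j ∈ Finset.range k, (1 + j) := by
  intro k
  induction k with
  | zero => simp
  | succ k ih =>
    intro hk
    rw [Finset.sum_range_succ, Finset.sum_range_succ, ih (by omega)]
    obtain ⟨e, he⟩ : ∃ e, n - k = e + 1 := ⟨n - k - 1, by omega⟩
    have h1 : n - (k + 1) = e := by omega
    have h2 : (e + 1) ^ 2 = e ^ 2 + 2 * e + 1 := by ring
    have h3 : (e + 1) ^ 2 ≤ n ^ 2 := Nat.pow_le_pow_left (by omega) 2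
    rw [he, h1]
    omega
section facts
variable {n : ℕ} {s t : Fin n → ℕ}

lemma count_pairs (x : ℕ) :
    Multiset.count x (pairsMultiset n s t)
      = ∑ i : Fin n, Multiset.count x ({s i, t i} : Multiset ℕ) := by
  rw [pairsMultiset, Multiset.count_bind]
  rfl

lemma mem_pairs_left (i : Fin n) : s i ∈ pairsMultiset n s t :=
  Multiset.mem_bind.mpr ⟨i, Finset.mem_univ_val i, by simp⟩

lemma mem_pairs_right (i : Fin n) : t i ∈ pairsMultiset n s t :=
  Multiset.mem_bind.mpr ⟨i, Finset.mem_univ_val i, by simp⟩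

lemma bounds_of_partition (h : IsPartitionOfIcc n s t) (x : ℕ)
    (hx : x ∈ pairsMultiset n s t) : 1 ≤ x ∧ x ≤ 2 * n := by
  rw [h] at hx
  obtain ⟨y, hy, rfl⟩ := Multiset.mem_map.mp hx
  rw [Multiset.mem_range] at hy
  omega

lemma nodup_of_partition (h : IsPartitionOfIcc n s t) :
    (pairsMultiset n s t).Nodup := by
  rw [h]
  exact (Multiset.nodup_range _).map fun x y hxy => by omega

lemma inj_of_count (h : IsPartitionOfIcc n s t)
    (f : Fin n → ℕ) (hf : ∀ i, f i ∈ ({s i, t i} : Multiset ℕ)) :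
    Function.Injective f := by
  intro i j hij
  by_contra hne
  have hcount : Multiset.count (f i) (pairsMultiset n s t) ≤ 1 :=
    Multiset.nodup_iff_count_le_one.mp (nodup_of_partition h) _
  rw [count_pairs] at hcount
  have h2 : ∑ x ∈ ({i, j} : Finset (Fin n)),
      Multiset.count (f i) ({s x, t x} : Multiset ℕ)
      ≤ ∑ x : Fin n, Multiset.count (f i) ({s x, t x} : Multiset ℕ) :=
    Finset.sum_le_sum_of_subset (Finset.subset_univ _)
  rw [Finset.sum_pair hne] at h2
  have hi : 1 ≤ Multiset.count (f i) ({s i, t i} : Multiset ℕ) :=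
    Multiset.one_le_count_iff_mem.mpr (hf i)
  have hj : 1 ≤ Multiset.count (f i) ({s j, t j} : Multiset ℕ) :=
    Multiset.one_le_count_iff_mem.mpr (hij ▸ hf j)
  omega

end facts

theorem stmt9 (n : ℕ) (a : Fin n → ℕ) (ha_pos : ∀ i, 0 < a i) (ha_mono : Monotone a)
    (hA : ∃ s t : Fin n → ℕ, IsPartitionOfIcc n s t ∧ (∀ i, s i < t i) ∧
      Multiset.map (fun i => t i - s i) (Finset.univ : Finset (Fin n)).val =
        Multiset.map a (Finset.univ : Finset (Fin n)).val) :
    ∀ m : Fin n, ∑ i ∈ Finset.univ.filter (fun i => m ≤ i), a i ≤ n ^ 2 - (m : ℕ) ^ 2 := by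
  classical
  obtain ⟨s, t, hpart, hst, hmap⟩ := hA
  intro m
  set d : Fin n → ℕ := fun i => t i - s i with hd
  set τ := Tuple.sort d with hτ
  have hperm : List.Perm (List.ofFn (d ∘ ⇑τ)) (List.ofFn a) := by
    refine (Equiv.Perm.ofFn_comp_perm τ d).trans ?_
    exact Multiset.coe_eq_coe.mp (by
      rw [← Fin.univ_val_map, ← Fin.univ_val_map]; exact hmap)
  have hda : a = d ∘ τ :=
    (List.ofFn_injective (List.Perm.eq_of_sortedLE
      ((Tuple.monotone_sort d).sortedLE_ofFn) ha_mono.sortedLE_ofFn hperm)).symm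
  set F : Finset (Fin n) := Finset.univ.filter (fun i => m ≤ i) with hF
  have hFcard : F.card = n - m := by
    have hFI : F = Finset.Ici m := by ext i; simp [hF]
    rw [hFI, Fin.card_Ici]
  set S := F.image τ with hS
  have hScard : S.card = n - m := by
    rw [hS, Finset.card_image_of_injective _ τ.injective, hFcard]
  have hsum1 : ∑ i ∈ F, a i = ∑ j ∈ S, d j := by
    rw [hS, Finset.sum_image (fun x _ y _ h => τ.injective h), hda]; rfl
  have hsum2 : ∑ j ∈ S, d j = ∑ j ∈ S, t j - ∑ j ∈ S, s j := by
    simpa [hd] using Finset.sum_tsub_distrib S (f := t) (g := s)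
      (fun j _ => (hst j).le)
  have htinj : Function.Injective t := inj_of_count hpart t (fun i => by simp)
  have hsinj : Function.Injective s := inj_of_count hpart s (fun i => by simp)
  have htub : ∑ j ∈ S, t j ≤ ∑ j ∈ Finset.range (n - m), (2 * n - j) := by
    have h1 : ∑ x ∈ S.image t, x = ∑ j ∈ S, t j :=
      Finset.sum_image (fun x _ y _ h => htinj h)
    have h2 : (S.image t).card = n - m := by
      rw [Finset.card_image_of_injective _ htinj, hScard]
    rw [← h1, ← h2]
    exact sumUpper _ (2 * n) (fun x hx => by
      obtain ⟨j, _, rfl⟩ := Finset.mem_image.mp hx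
      exact (bounds_of_partition hpart _ (mem_pairs_right j)).2)
  have hslb : ∑ j ∈ Finset.range (n - m), (1 + j) ≤ ∑ j ∈ S, s j := by
    have h1 : ∑ x ∈ S.image s, x = ∑ j ∈ S, s j :=
      Finset.sum_image (fun x _ y _ h => hsinj h)
    have h2 : (S.image s).card = n - m := by
      rw [Finset.card_image_of_injective _ hsinj, hScard]
    rw [← h1, ← h2]
    exact sumLower _ 1 (fun x hx => by
      obtain ⟨j, _, rfl⟩ := Finset.mem_image.mp hx
      exact (bounds_of_partition hpart _ (mem_pairs_left j)).1)
  have hmn : (m : ℕ) < n := m.isLt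
  have hkey := keySum n (n - m) (by omega)
  have hnm : n - (n - (m : ℕ)) = m := by omega
  rw [hnm] at hkey
  have hsum3 : ∑ j ∈ S, s j ≤ ∑ j ∈ S, t j :=
    Finset.sum_le_sum (fun j _ => (hst j).le)
  rw [hsum1, hsum2]
  omega
end

section
/- Let A = {a_1, a_2, …, a_n} be a multi Skolem set. Then the number of indices i with a_i even is even. -/
theorem stmt10 (n : ℕ) (a : Fin n → ℕ) (ha_pos : ∀ i, 0 < a i)
    (hA : ∃ s t : Fin n → ℕ, IsPartitionOfIcc n s t ∧ (∀ i, s i < t i) ∧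
      Multiset.map (fun i => t i - s i) (Finset.univ : Finset (Fin n)).val =
        Multiset.map a (Finset.univ : Finset (Fin n)).val) :
    Even (Finset.univ.filter fun i => Even (a i)).card := by
  obtain ⟨s, t, hpart, hlt, hmap⟩ := hA
  -- sums of differences equal sum of a
  have h1 : ∑ i, (t i - s i) = ∑ i, a i := by
    simpa [Finset.sum] using congrArg Multiset.sum hmap
  -- total sum of endpoints
  have h2 : ∑ i, (s i + t i) = Multiset.sum (Multiset.map (· + 1) (Multiset.range (2 * n))) := by
    rw [← hpart, pairsMultiset, Multiset.sum_bind, Finset.sum]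
    refine congrArg Multiset.sum (Multiset.map_congr rfl ?_)
    intro i _
    simp
  have h3 : Multiset.sum (Multiset.map (· + 1) (Multiset.range (2 * n))) =
      ∑ k ∈ Finset.range (2 * n), (k + 1) := by
    simp [Finset.sum, Finset.range]
  have h4 : (∑ k ∈ Finset.range (2 * n + 1), k) * 2 = (2 * n + 1) * (2 * n + 1 - 1) :=
    Finset.sum_range_id_mul_two (2 * n + 1)
  have h5 : ∑ k ∈ Finset.range (2 * n), (k + 1) = 2 * (n * n) + n := by
    have hsum : ∑ k ∈ Finset.range (2 * n + 1), k =
        ∑ k ∈ Finset.range (2 * n), (k + 1) := by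
      rw [Finset.sum_range_succ' (fun k => k) (2 * n)]
      simp
    rw [hsum] at h4
    apply Nat.eq_of_mul_eq_mul_right (show 0 < 2 by norm_num)
    rw [h4, Nat.add_sub_cancel]
    ring
  -- ∑ (s+t) = ∑ (t-s) + 2 ∑ s
  have h6 : ∑ i, (s i + t i) = (∑ i, (t i - s i)) + 2 * ∑ i, s i := by
    rw [Finset.mul_sum, ← Finset.sum_add_distrib]
    apply Finset.sum_congr rfl
    intro i _
    have := hlt i
    omega
  have key : (∑ i, a i) + 2 * ∑ i, s i = 2 * (n * n) + n := by
    rw [← h1, ← h6, h2, h3, h5]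
  -- number of odd a i
  have hcards : (Finset.univ.filter fun i => Even (a i)).card +
      (Finset.univ.filter fun i => ¬ Even (a i)).card = n := by
    rw [Finset.card_filter_add_card_filter_not]
    simp
  -- parity of sum equals parity of number of odds
  have hpar : ((∑ i, a i : ℕ) : ZMod 2) =
      (((Finset.univ.filter fun i => ¬ Even (a i)).card : ℕ) : ZMod 2) := by
    push_cast
    rw [← Finset.sum_filter_add_sum_filter_not Finset.univ (fun i => Even (a i))]
    have hz : ∑ i ∈ Finset.univ.filter (fun i => Even (a i)), ((a i : ZMod 2)) = 0 := by
      apply Finset.sum_eq_zero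
      intro i hi
      simp only [Finset.mem_filter] at hi
      obtain ⟨k, hk⟩ := hi.2
      rw [hk]; push_cast; ring_nf
      simp [show ((2:ZMod 2)) = 0 by decide]
    have ho : ∑ i ∈ Finset.univ.filter (fun i => ¬ Even (a i)), ((a i : ZMod 2)) =
        ((Finset.univ.filter fun i => ¬ Even (a i)).card : ZMod 2) := by
      rw [Finset.card_eq_sum_ones]
      push_cast
      apply Finset.sum_congr rfl
      intro i hi
      simp only [Finset.mem_filter] at hi
      rw [Nat.not_even_iff_odd] at hi
      obtain ⟨k, hk⟩ := hi.2
      rw [hk]; push_cast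
      simp [show ((2:ZMod 2)) = 0 by decide]
    rw [hz, ho, zero_add]
  rw [ZMod.natCast_eq_natCast_iff', ] at hpar
  rw [Nat.even_iff]
  omega
end

section
/- Let π be a permutation of {1, …, n} and let (a_1, a_2, …, a_n) with a_1 ≤ a_2 ≤ … ≤ a_n be the Toeplitz characteristic of π. Then a_1 + a_2 + … + a_k ≥ k² for each k with 1 ≤ k ≤ n, and a_1 + a_2 + … + a_n = n². -/
/-- `(a 0, …, a (n-1))` is the Toeplitz characteristic of `π`: it is nondecreasing
and every index `k` occurs in it exactly `d_k` times. -/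
def IsToeplitzChar (n : ℕ) (π : Equiv.Perm (Fin n)) (a : Fin n → ℕ) : Prop :=
  Monotone a ∧ ∀ k : ℕ, (Finset.univ.filter fun i => a i = k).card = diagXray n π k

/-- Sum of a finset of naturals of cardinality `m` is at least `0 + 1 + ⋯ + (m-1)`. -/
lemma aux_sum_range_le (T : Finset ℕ) : ∑ j ∈ Finset.range T.card, j ≤ ∑ x ∈ T, x := by
  induction' h : T.card with m ih generalizing T
  · simp
  · have hne : T.Nonempty := Finset.card_pos.mp (by omega)
    obtain ⟨M, hMmem, hMmax⟩ : ∃ M ∈ T, ∀ x ∈ T, x ≤ M :=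
      ⟨T.max' hne, T.max'_mem hne, fun x hx => T.le_max' x hx⟩
    have hcard : (T.erase M).card = m := by rw [Finset.card_erase_of_mem hMmem, h]; omega
    have hMge : m ≤ M := by
      by_contra hc
      push_neg at hc
      have hsub : T ⊆ Finset.range m := fun x hx =>
        Finset.mem_range.mpr (lt_of_le_of_lt (hMmax x hx) hc)
      have := Finset.card_le_card hsub
      rw [h, Finset.card_range] at this
      omega
    have hsum : M + ∑ x ∈ T.erase M, x = ∑ x ∈ T, x :=
      Finset.add_sum_erase T (fun x => x) hMmem
    rw [Finset.sum_range_succ]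
    have := ih (T.erase M) hcard
    omega

/-- Gauss identity split. -/
lemma aux_range_split (p q : ℕ) :
    ∑ j ∈ Finset.range (p + q), j = (∑ j ∈ Finset.range p, j) + p * q + ∑ j ∈ Finset.range q, j := by
  induction q with
  | zero => simp
  | succ q ih =>
    rw [show p + (q+1) = (p+q)+1 by omega, Finset.sum_range_succ, ih, Finset.sum_range_succ]
    ring

/-- Any `m`-element subset of indices carries total diagonal weight at least `m²`. -/
lemma aux_key (n : ℕ) (π : Equiv.Perm (Fin n)) (S : Finset (Fin n)) :
    S.card ^ 2 ≤ ∑ i ∈ S, (n + (π i : ℕ) - (i : ℕ)) := by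
  set m := S.card with hm
  have hmn : m ≤ n := by
    simpa using Finset.card_le_card (Finset.subset_univ S)
  -- A : sum of π i over S
  have hA : ∑ j ∈ Finset.range m, j ≤ ∑ i ∈ S, (π i : ℕ) := by
    have himg : (S.image fun i => (π i : ℕ)).card = m := by
      rw [Finset.card_image_of_injective _ (fun x y hxy => π.injective (Fin.val_injective hxy)), hm]
    calc ∑ j ∈ Finset.range m, j
        = ∑ j ∈ Finset.range (S.image fun i => (π i : ℕ)).card, j := by rw [himg]
      _ ≤ ∑ x ∈ S.image (fun i => (π i : ℕ)), x := aux_sum_range_le _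
      _ = ∑ i ∈ S, (π i : ℕ) :=
          Finset.sum_image (fun x _ y _ hxy => π.injective (Fin.val_injective hxy))
  -- B : sum of i over S
  have hB : (∑ i ∈ S, (i : ℕ)) + ∑ j ∈ Finset.range (n - m), j ≤ ∑ j ∈ Finset.range n, j := by
    set T := S.image (fun i : Fin n => (i : ℕ)) with hT
    have hTsub : T ⊆ Finset.range n := by
      intro x hx
      simp only [hT, Finset.mem_image] at hx
      obtain ⟨i, _, rfl⟩ := hx
      exact Finset.mem_range.mpr i.isLt
    have hTcard : T.card = m := Finset.card_image_of_injective _ Fin.val_injective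
    have hTsum : ∑ x ∈ T, x = ∑ i ∈ S, (i : ℕ) :=
      Finset.sum_image (fun x _ y _ hxy => Fin.val_injective hxy)
    have hcomp : (Finset.range n \ T).card = n - m := by
      rw [Finset.card_sdiff_of_subset hTsub, Finset.card_range, hTcard]
    have := aux_sum_range_le (Finset.range n \ T)
    rw [hcomp] at this
    have h2 : ∑ x ∈ T, x + ∑ x ∈ Finset.range n \ T, x = ∑ j ∈ Finset.range n, j := by
      rw [← Finset.sum_union (Finset.disjoint_sdiff)]
      congr 1
      exact (Finset.union_sdiff_of_subset hTsub)
    omega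
  -- term-wise: i + v i = n + π i
  have hterm : (∑ i ∈ S, (i : ℕ)) + ∑ i ∈ S, (n + (π i : ℕ) - (i : ℕ))
      = n * m + ∑ i ∈ S, (π i : ℕ) := by
    rw [← Finset.sum_add_distrib]
    have : ∀ i ∈ S, (i : ℕ) + (n + (π i : ℕ) - (i : ℕ)) = n + (π i : ℕ) := by
      intro i _
      have := i.isLt
      omega
    rw [Finset.sum_congr rfl this, Finset.sum_add_distrib, Finset.sum_const, hm,
      smul_eq_mul, mul_comm]
  have hgauss := aux_range_split m (n - m)
  rw [Nat.add_sub_cancel' hmn] at hgauss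
  have hsq : m ^ 2 = m * m := sq m
  have hmul : m * (n - m) + m * m = m * n := by
    rw [← Nat.mul_add, Nat.sub_add_cancel hmn]
  have hcomm : n * m = m * n := Nat.mul_comm n m
  linarith [hA, hB, hterm, hgauss, hmul, hcomm]

theorem stmt11 (n : ℕ) (π : Equiv.Perm (Fin n)) (a : Fin n → ℕ)
    (ha : IsToeplitzChar n π a) :
    (∀ k : Fin n, ((k : ℕ) + 1) ^ 2 ≤ ∑ i ∈ Finset.univ.filter (fun i => i ≤ k), a i) ∧
      ∑ i, a i = n ^ 2 := by
  obtain ⟨hmono, hcount⟩ := ha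
  set v : Fin n → ℕ := fun i => n + (π i : ℕ) - (i : ℕ) with hv
  -- diagXray in terms of v
  have hd : ∀ k : ℕ, diagXray n π (k : ℤ) = (Finset.univ.filter fun i => v i = k).card := by
    intro k
    unfold diagXray
    congr 1
    apply Finset.filter_congr
    intro i _
    have h1 : (i : ℕ) < n := i.isLt
    have h2 : (π i : ℕ) < n := (π i).isLt
    simp only [hv]
    constructor <;> intro h <;> omega
  -- multiset equality
  have hms : Multiset.map a Finset.univ.val = Multiset.map v Finset.univ.val := by
    apply Multiset.ext.mpr
    intro k
    rw [Multiset.count_map, Multiset.count_map,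
      Multiset.filter_congr (fun x _ => (eq_comm : k = a x ↔ a x = k)),
      Multiset.filter_congr (fun x _ => (eq_comm : k = v x ↔ v x = k))]
    have h1 : (Finset.univ.filter fun i => a i = k).card = (Finset.univ.filter fun i => v i = k).card := by
      rw [hcount k, hd k]
    exact h1
  set σ : Equiv.Perm (Fin n) := Tuple.sort v with hσ
  have haveq : a = v ∘ σ := by
    apply List.ofFn_injective
    apply List.Perm.eq_of_sortedLE hmono.sortedLE_ofFn (Tuple.monotone_sort v).sortedLE_ofFn
    have hp1 : List.Perm (List.ofFn a) (List.ofFn v) := by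
      rw [← Multiset.coe_eq_coe, ← Fin.univ_val_map, ← Fin.univ_val_map]
      exact hms
    exact hp1.trans (σ.ofFn_comp_perm v).symm
  constructor
  · intro k
    set F := Finset.univ.filter (fun i : Fin n => i ≤ k) with hF
    have hFcard : F.card = (k : ℕ) + 1 := by
      have : F = Finset.Iic k := by
        ext i; simp [hF, Finset.mem_Iic]
      rw [this, Fin.card_Iic]
    have hsum : ∑ i ∈ F, a i = ∑ j ∈ F.image σ, v j := by
      rw [Finset.sum_image (fun x _ y _ hxy => σ.injective hxy)]
      exact Finset.sum_congr rfl (fun i _ => by rw [haveq]; rfl)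
    have hcard : (F.image σ).card = (k : ℕ) + 1 := by
      rw [Finset.card_image_of_injective _ σ.injective, hFcard]
    calc ((k : ℕ) + 1) ^ 2 = (F.image σ).card ^ 2 := by rw [hcard]
      _ ≤ ∑ j ∈ F.image σ, v j := aux_key n π _
      _ = ∑ i ∈ F, a i := hsum.symm
  · have h1 : ∑ i, a i = ∑ i, v (σ i) := by
      rw [haveq]; rfl
    have h2 : ∑ i, v (σ i) = ∑ i, v i := Equiv.sum_comp σ v
    have h3 : (∑ i : Fin n, (i : ℕ)) + ∑ i : Fin n, v i = ∑ i : Fin n, (n + (π i : ℕ)) := by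
      rw [← Finset.sum_add_distrib]
      apply Finset.sum_congr rfl
      intro i _
      have := i.isLt
      simp only [hv]
      omega
    have h4 : ∑ i : Fin n, (n + (π i : ℕ)) = n * n + ∑ i : Fin n, (π i : ℕ) := by
      rw [Finset.sum_add_distrib, Finset.sum_const, Finset.card_univ, Fintype.card_fin,
        smul_eq_mul]
    have h5 : ∑ i : Fin n, ((π i : ℕ)) = ∑ i : Fin n, (i : ℕ) :=
      Equiv.sum_comp π (fun i : Fin n => (i : ℕ))
    have : ∑ i, v i = n * n := by omega
    rw [h1, h2, this, sq]
end

section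
/- Let D be an n × n doubly stochastic real matrix whose diagonal X-ray d(D) = (d_1, …, d_{2n−1}) is binary, i.e., d_k ∈ {0, 1} for all k, and let a_1 < a_2 < … < a_n be the indices k with d_k = 1 (there are exactly n such indices). Then a_1 + a_2 + … + a_k ≥ k² for each k with 1 ≤ k ≤ n, and a_1 + a_2 + … + a_n = n². -/
/-- The `k`-th entry of the diagonal X-ray of an `n × n` real matrix `D`
(indices encoded 0-based): `d_k = Σ_{i - j = n - k} D i j`. -/
def dsDiagXray (n : ℕ) (D : Matrix (Fin n) (Fin n) ℝ) (k : ℤ) : ℝ :=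
  ∑ i : Fin n, ∑ j : Fin n,
    if ((i : ℕ) : ℤ) - ((j : ℕ) : ℤ) = (n : ℤ) - k then D i j else 0

open Finset

/-- Gauss-type sum: `∑_{r<K} (2K-1-2r) = K²`. -/
lemma dsAux_gauss (K : ℕ) : ∑ r ∈ Finset.range K, (2 * (K : ℝ) - 1 - 2 * r) = (K : ℝ) ^ 2 := by
  induction K with
  | zero => simp
  | succ m ih =>
    rw [Finset.sum_range_succ]
    have h1 : ∑ r ∈ Finset.range m, (2 * ((m + 1 : ℕ) : ℝ) - 1 - 2 * r)
        = ∑ r ∈ Finset.range m, ((2 * (m : ℝ) - 1 - 2 * r) + 2) := by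
      apply Finset.sum_congr rfl; intro r _; push_cast; ring
    rw [h1, Finset.sum_add_distrib, ih, Finset.sum_const, Finset.card_range]
    push_cast
    ring

lemma dsAux_sum_max (K n : ℕ) :
    ∑ r ∈ Finset.range n, max (2 * (K : ℝ) - 1 - 2 * r) 0 ≤ (K : ℝ) ^ 2 := by
  calc ∑ r ∈ Finset.range n, max (2 * (K : ℝ) - 1 - 2 * r) 0
      ≤ ∑ r ∈ Finset.range n, (if r < K then (2 * (K : ℝ) - 1 - 2 * r) else 0) := by
        apply Finset.sum_le_sum
        intro r _
        by_cases h : r < K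
        · rw [if_pos h]
          apply max_le le_rfl
          have : (r : ℝ) + 1 ≤ (K : ℝ) := by exact_mod_cast h
          linarith
        · rw [if_neg h]
          apply max_le _ le_rfl
          have : (K : ℝ) ≤ (r : ℝ) := by exact_mod_cast Nat.le_of_not_lt h
          linarith
    _ = ∑ r ∈ (Finset.range n).filter (· < K), (2 * (K : ℝ) - 1 - 2 * r) :=
        (Finset.sum_filter _ _).symm
    _ ≤ ∑ r ∈ Finset.range K, (2 * (K : ℝ) - 1 - 2 * r) := by
        apply Finset.sum_le_sum_of_subset_of_nonneg
        · intro r hr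
          simp only [Finset.mem_filter, Finset.mem_range] at hr ⊢
          exact hr.2
        · intro r hr _
          simp only [Finset.mem_range] at hr
          have : (r : ℝ) + 1 ≤ (K : ℝ) := by exact_mod_cast hr
          linarith
    _ = (K : ℝ) ^ 2 := dsAux_gauss K

/-- Restriction identity: a weighted sum of X-ray values over a finite set of
diagonal indices equals a matrix sum restricted to those diagonals. -/
lemma dsAux_restrict (n : ℕ) (D : Matrix (Fin n) (Fin n) ℝ) (S : Finset ℤ) (f : ℤ → ℝ) :
    ∑ t ∈ S, f t * dsDiagXray n D t
      = ∑ p : Fin n, ∑ q : Fin n,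
          (if ((n : ℤ) - (p : ℕ) + (q : ℕ)) ∈ S
            then f ((n : ℤ) - (p : ℕ) + (q : ℕ)) * D p q else 0) := by
  unfold dsDiagXray
  have key : ∀ p q : Fin n,
      (∑ t ∈ S, if ((p : ℕ) : ℤ) - ((q : ℕ) : ℤ) = (n : ℤ) - t then f t * D p q else 0)
        = if ((n : ℤ) - (p : ℕ) + (q : ℕ)) ∈ S
            then f ((n : ℤ) - (p : ℕ) + (q : ℕ)) * D p q else 0 := by
    intro p q
    rw [← Finset.sum_ite_eq S ((n : ℤ) - (p : ℕ) + (q : ℕ)) (fun t => f t * D p q)]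
    refine Finset.sum_congr rfl fun t _ => ?_
    refine if_congr ?_ rfl rfl
    omega
  calc ∑ t ∈ S, f t * (∑ p : Fin n, ∑ q : Fin n,
          if ((p : ℕ) : ℤ) - ((q : ℕ) : ℤ) = (n : ℤ) - t then D p q else 0)
      = ∑ t ∈ S, ∑ p : Fin n, ∑ q : Fin n,
          (if ((p : ℕ) : ℤ) - ((q : ℕ) : ℤ) = (n : ℤ) - t then f t * D p q else 0) := by
        apply Finset.sum_congr rfl
        intro t _
        rw [Finset.mul_sum]
        apply Finset.sum_congr rfl
        intro p _
        rw [Finset.mul_sum]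
        apply Finset.sum_congr rfl
        intro q _
        rw [mul_ite, mul_zero]
    _ = ∑ p : Fin n, ∑ q : Fin n, ∑ t ∈ S,
          (if ((p : ℕ) : ℤ) - ((q : ℕ) : ℤ) = (n : ℤ) - t then f t * D p q else 0) := by
        rw [Finset.sum_comm]
        apply Finset.sum_congr rfl
        intro p _
        rw [Finset.sum_comm]
    _ = _ := by
        apply Finset.sum_congr rfl; intro p _
        apply Finset.sum_congr rfl; intro q _
        exact key p q

/-- The key partial-sum bound: for any finite index set `I`,
`(#I)² ≤ ∑_{i∈I} a i`. -/
lemma dsAux_partial (n : ℕ) (D : Matrix (Fin n) (Fin n) ℝ)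
    (hD_nonneg : ∀ i j, 0 ≤ D i j)
    (hD_row : ∀ i, ∑ j, D i j = 1) (hD_col : ∀ j, ∑ i, D i j = 1)
    (a : Fin n → ℕ) (ha_inj : Function.Injective a)
    (ha_one : ∀ i, dsDiagXray n D (a i) = 1) (I : Finset (Fin n)) :
    ((I.card : ℝ)) ^ 2 ≤ ∑ i ∈ I, (a i : ℝ) := by
  classical
  set K : ℕ := I.card with hK
  set S : Finset ℤ := I.image (fun i => ((a i : ℕ) : ℤ)) with hS
  have hinj : Set.InjOn (fun i => ((a i : ℕ) : ℤ)) I := by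
    intro x _ y _ h
    have h' : ((a x : ℕ) : ℤ) = ((a y : ℕ) : ℤ) := h
    exact ha_inj (by exact_mod_cast h')
  have hcardS : S.card = K := by
    rw [hS, Finset.card_image_of_injOn hinj]
  -- the restricted matrix
  set E : Fin n → Fin n → ℝ :=
    fun p q => if ((n : ℤ) - (p : ℕ) + (q : ℕ)) ∈ S then D p q else 0 with hE
  have hE_nonneg : ∀ p q, 0 ≤ E p q := by
    intro p q; rw [hE]; dsimp only
    split
    · exact hD_nonneg p q
    · exact le_rfl
  have hE_le : ∀ p q, E p q ≤ D p q := by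
    intro p q; rw [hE]; dsimp only
    split
    · exact le_rfl
    · exact hD_nonneg p q
  have hd_one : ∀ t ∈ S, dsDiagXray n D t = 1 := by
    intro t ht
    rw [hS] at ht
    obtain ⟨i, _, rfl⟩ := Finset.mem_image.mp ht
    exact ha_one i
  -- total mass of E is K
  have hmass : ∑ p : Fin n, ∑ q : Fin n, E p q = (K : ℝ) := by
    have h1 := dsAux_restrict n D S (fun _ => 1)
    simp only [one_mul] at h1
    have h2 : ∑ t ∈ S, dsDiagXray n D t = (K : ℝ) := by
      rw [Finset.sum_congr rfl hd_one, Finset.sum_const, hcardS, nsmul_eq_mul, mul_one]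
    rw [hE]
    dsimp only
    rw [← h1, h2]
  -- weighted sum of E equals ∑ a i over I
  have hweight : ∑ p : Fin n, ∑ q : Fin n, ((n : ℝ) - (p : ℕ) + (q : ℕ)) * E p q
      = ∑ i ∈ I, (a i : ℝ) := by
    have h1 := dsAux_restrict n D S (fun t => (t : ℝ))
    have h2 : ∑ t ∈ S, ((t : ℝ)) * dsDiagXray n D t = ∑ t ∈ S, (t : ℝ) := by
      apply Finset.sum_congr rfl
      intro t ht; rw [hd_one t ht, mul_one]
    have h3 : ∑ t ∈ S, (t : ℝ) = ∑ i ∈ I, (a i : ℝ) := by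
      rw [hS, Finset.sum_image hinj]
      push_cast
      rfl
    rw [← h3, ← h2, h1]
    apply Finset.sum_congr rfl; intro p _
    apply Finset.sum_congr rfl; intro q _
    rw [hE]; dsimp only
    split
    · push_cast; ring
    · rw [mul_zero]
  -- row and column sums of E are at most 1
  have hrow : ∀ p, ∑ q : Fin n, E p q ≤ 1 := by
    intro p
    calc ∑ q : Fin n, E p q ≤ ∑ q : Fin n, D p q :=
          Finset.sum_le_sum fun q _ => hE_le p q
      _ = 1 := hD_row p
  have hcol : ∀ q, ∑ p : Fin n, E p q ≤ 1 := by
    intro q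
    calc ∑ p : Fin n, E p q ≤ ∑ p : Fin n, D p q :=
          Finset.sum_le_sum fun p _ => hE_le p q
      _ = 1 := hD_col q
  -- dual weights
  set U : Fin n → ℝ := fun p => max (2 * (K : ℝ) - 1 - 2 * ((n : ℝ) - 1 - (p : ℕ))) 0 with hU
  set V : Fin n → ℝ := fun q => max (2 * (K : ℝ) - 1 - 2 * ((q : ℕ) : ℝ)) 0 with hV
  have hU_nonneg : ∀ p, 0 ≤ U p := fun p => le_max_right _ _
  have hV_nonneg : ∀ q, 0 ≤ V q := fun q => le_max_right _ _
  have hU_ge : ∀ p : Fin n, 2 * (K : ℝ) - 1 - 2 * ((n : ℝ) - 1 - (p : ℕ)) ≤ U p :=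
    fun p => le_max_left _ _
  have hV_ge : ∀ q : Fin n, 2 * (K : ℝ) - 1 - 2 * ((q : ℕ) : ℝ) ≤ V q :=
    fun q => le_max_left _ _
  -- sum bounds on the dual weights
  have hVsum : ∑ q : Fin n, V q ≤ (K : ℝ) ^ 2 := by
    rw [hV, Fin.sum_univ_eq_sum_range (fun q => max (2 * (K : ℝ) - 1 - 2 * (q : ℝ)) 0) n]
    exact dsAux_sum_max K n
  have hUsum : ∑ p : Fin n, U p ≤ (K : ℝ) ^ 2 := by
    rw [hU, Fin.sum_univ_eq_sum_range
      (fun p => max (2 * (K : ℝ) - 1 - 2 * ((n : ℝ) - 1 - (p : ℝ))) 0) n]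
    have h4 : ∑ r ∈ Finset.range n, max (2 * (K : ℝ) - 1 - 2 * ((n : ℝ) - 1 - (r : ℝ))) 0
        = ∑ r ∈ Finset.range n, max (2 * (K : ℝ) - 1 - 2 * (((n - 1 - r : ℕ)) : ℝ)) 0 := by
      apply Finset.sum_congr rfl
      intro r hr
      have hrn : r < n := Finset.mem_range.mp hr
      have hc : ((n - 1 - r : ℕ) : ℝ) = (n : ℝ) - 1 - (r : ℝ) := by
        have h5 : n - 1 - r + r + 1 = n := by omega
        have h6 := congrArg (fun m : ℕ => (m : ℝ)) h5
        push_cast at h6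
        linarith
      rw [hc]
    rw [h4, Finset.sum_range_reflect (fun r => max (2 * (K : ℝ) - 1 - 2 * ((r : ℕ) : ℝ)) 0) n]
    exact dsAux_sum_max K n
  -- pointwise inequality
  have hpoint : ∀ p : Fin n, ∀ q : Fin n,
      (4 * (K : ℝ) - U p - V q) * E p q ≤ 2 * (((n : ℝ) - (p : ℕ) + (q : ℕ)) * E p q) := by
    intro p q
    have h1 : 4 * (K : ℝ) - U p - V q ≤ 2 * ((n : ℝ) - (p : ℕ) + (q : ℕ)) := by
      have hu := hU_ge p
      have hv := hV_ge q
      linarith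
    have h2 := mul_le_mul_of_nonneg_right h1 (hE_nonneg p q)
    linarith
  -- expansion of the dual-weighted sum
  have hexp : ∑ p : Fin n, ∑ q : Fin n, (4 * (K : ℝ) - U p - V q) * E p q
      = 4 * (K : ℝ) * (∑ p : Fin n, ∑ q : Fin n, E p q)
        - (∑ p : Fin n, U p * ∑ q : Fin n, E p q)
        - (∑ q : Fin n, V q * ∑ p : Fin n, E p q) := by
    have e1 : ∀ p : Fin n, ∑ q : Fin n, (4 * (K : ℝ) - U p - V q) * E p q
        = 4 * (K : ℝ) * (∑ q : Fin n, E p q) - U p * (∑ q : Fin n, E p q)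
          - (∑ q : Fin n, V q * E p q) := by
      intro p
      rw [Finset.mul_sum, Finset.mul_sum, ← Finset.sum_sub_distrib, ← Finset.sum_sub_distrib]
      apply Finset.sum_congr rfl; intro q _; ring
    rw [Finset.sum_congr rfl fun p _ => e1 p]
    rw [Finset.sum_sub_distrib, Finset.sum_sub_distrib, ← Finset.mul_sum]
    congr 1
    rw [Finset.sum_comm]
    apply Finset.sum_congr rfl; intro q _
    rw [Finset.mul_sum]
  -- putting it together
  have hUrow : ∑ p : Fin n, U p * ∑ q : Fin n, E p q ≤ (K : ℝ) ^ 2 := by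
    calc ∑ p : Fin n, U p * ∑ q : Fin n, E p q
        ≤ ∑ p : Fin n, U p * 1 := by
          apply Finset.sum_le_sum
          intro p _
          exact mul_le_mul_of_nonneg_left (hrow p) (hU_nonneg p)
      _ = ∑ p : Fin n, U p := by simp
      _ ≤ (K : ℝ) ^ 2 := hUsum
  have hVcol : ∑ q : Fin n, V q * ∑ p : Fin n, E p q ≤ (K : ℝ) ^ 2 := by
    calc ∑ q : Fin n, V q * ∑ p : Fin n, E p q
        ≤ ∑ q : Fin n, V q * 1 := by
          apply Finset.sum_le_sum
          intro q _
          exact mul_le_mul_of_nonneg_left (hcol q) (hV_nonneg q)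
      _ = ∑ q : Fin n, V q := by simp
      _ ≤ (K : ℝ) ^ 2 := hVsum
  have hmain : 2 * (K : ℝ) ^ 2 ≤ 2 * ∑ i ∈ I, (a i : ℝ) := by
    calc 2 * (K : ℝ) ^ 2
        ≤ 4 * (K : ℝ) * (K : ℝ) - (K : ℝ) ^ 2 - (K : ℝ) ^ 2 := by ring_nf; linarith [sq_nonneg (K : ℝ)]
      _ ≤ 4 * (K : ℝ) * (∑ p : Fin n, ∑ q : Fin n, E p q)
            - (∑ p : Fin n, U p * ∑ q : Fin n, E p q)
            - (∑ q : Fin n, V q * ∑ p : Fin n, E p q) := by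
          rw [hmass]
          linarith [hUrow, hVcol]
      _ = ∑ p : Fin n, ∑ q : Fin n, (4 * (K : ℝ) - U p - V q) * E p q := hexp.symm
      _ ≤ ∑ p : Fin n, ∑ q : Fin n, 2 * (((n : ℝ) - (p : ℕ) + (q : ℕ)) * E p q) := by
          apply Finset.sum_le_sum
          intro p _
          exact Finset.sum_le_sum fun q _ => hpoint p q
      _ = 2 * ∑ i ∈ I, (a i : ℝ) := by
          rw [← hweight, Finset.mul_sum]
          apply Finset.sum_congr rfl; intro p _
          rw [Finset.mul_sum]
  linarith

theorem stmt12 (n : ℕ) (hn : 0 < n) (D : Matrix (Fin n) (Fin n) ℝ)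
    (hD_nonneg : ∀ i j, 0 ≤ D i j)
    (hD_row : ∀ i, ∑ j, D i j = 1) (hD_col : ∀ j, ∑ i, D i j = 1)
    (hbinary : ∀ k : ℤ, dsDiagXray n D k = 0 ∨ dsDiagXray n D k = 1)
    (a : Fin n → ℕ) (ha_mono : StrictMono a)
    (ha_one : ∀ i, dsDiagXray n D (a i) = 1)
    (ha_all : ∀ k : ℕ, 1 ≤ k → k ≤ 2 * n - 1 → dsDiagXray n D k = 1 → ∃ i, a i = k) :
    (∀ k : Fin n, ((k : ℕ) + 1) ^ 2 ≤ ∑ i ∈ Finset.univ.filter (fun i => i ≤ k), a i) ∧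
      ∑ i, a i = n ^ 2 := by
  classical
  have hpart : ∀ I : Finset (Fin n), ((I.card : ℝ)) ^ 2 ≤ ∑ i ∈ I, (a i : ℝ) :=
    dsAux_partial n D hD_nonneg hD_row hD_col a ha_mono.injective ha_one
  constructor
  · intro k
    have h := hpart (Finset.univ.filter (fun i => i ≤ k))
    have hcard : (Finset.univ.filter (fun i => i ≤ k)).card = (k : ℕ) + 1 := by
      have : Finset.univ.filter (fun i => i ≤ k) = Finset.Iic k := by
        ext i; simp
      rw [this, Fin.card_Iic]
    rw [hcard] at h
    have hcast : ((∑ i ∈ Finset.univ.filter (fun i => i ≤ k), a i : ℕ) : ℝ)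
        = ∑ i ∈ Finset.univ.filter (fun i => i ≤ k), (a i : ℝ) := by
      push_cast; rfl
    have : (((k : ℕ) + 1) ^ 2 : ℝ) ≤ ((∑ i ∈ Finset.univ.filter (fun i => i ≤ k), a i : ℕ) : ℝ) := by
      rw [hcast]; exact_mod_cast h
    exact_mod_cast this
  · -- total equals n²
    -- lower bound
    have hge : ((n : ℝ)) ^ 2 ≤ ∑ i : Fin n, (a i : ℝ) := by
      have h := hpart Finset.univ
      rwa [Finset.card_univ, Fintype.card_fin] at h
    -- upper bound
    have hA : ∑ p : Fin n, ∑ q : Fin n, ((n : ℝ) - (p : ℕ) + (q : ℕ)) * D p q = (n : ℝ) ^ 2 := by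
      have e1 : ∀ p : Fin n, ∑ q : Fin n, ((n : ℝ) - (p : ℕ) + (q : ℕ)) * D p q
          = ((n : ℝ) - (p : ℕ)) + ∑ q : Fin n, ((q : ℕ) : ℝ) * D p q := by
        intro p
        have : ∀ q : Fin n, ((n : ℝ) - (p : ℕ) + (q : ℕ)) * D p q
            = ((n : ℝ) - (p : ℕ)) * D p q + ((q : ℕ) : ℝ) * D p q := by
          intro q; ring
        rw [Finset.sum_congr rfl fun q _ => this q, Finset.sum_add_distrib, ← Finset.mul_sum,
          hD_row p, mul_one]
      rw [Finset.sum_congr rfl fun p _ => e1 p, Finset.sum_add_distrib]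
      have e2 : ∑ p : Fin n, ∑ q : Fin n, ((q : ℕ) : ℝ) * D p q = ∑ q : Fin n, ((q : ℕ) : ℝ) := by
        rw [Finset.sum_comm]
        apply Finset.sum_congr rfl; intro q _
        rw [← Finset.mul_sum, hD_col q, mul_one]
      rw [e2, ← Finset.sum_add_distrib]
      have e3 : ∀ p : Fin n, ((n : ℝ) - (p : ℕ)) + ((p : ℕ) : ℝ) = (n : ℝ) := by
        intro p; ring
      rw [Finset.sum_congr rfl fun p _ => e3 p, Finset.sum_const, Finset.card_univ,
        Fintype.card_fin, nsmul_eq_mul]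
      ring
    have hle : ∑ i : Fin n, (a i : ℝ) ≤ (n : ℝ) ^ 2 := by
      set S : Finset ℤ := Finset.univ.image (fun i => ((a i : ℕ) : ℤ)) with hS
      have hinj : Set.InjOn (fun i : Fin n => ((a i : ℕ) : ℤ))
          ↑(Finset.univ : Finset (Fin n)) := by
        intro x _ y _ h
        have h' : ((a x : ℕ) : ℤ) = ((a y : ℕ) : ℤ) := h
        exact ha_mono.injective (by exact_mod_cast h')
      have h1 := dsAux_restrict n D S (fun t => (t : ℝ))
      have h2 : ∑ t ∈ S, ((t : ℝ)) * dsDiagXray n D t = ∑ t ∈ S, (t : ℝ) := by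
        apply Finset.sum_congr rfl
        intro t ht
        rw [hS] at ht
        obtain ⟨i, _, rfl⟩ := Finset.mem_image.mp ht
        rw [ha_one i, mul_one]
      have h3 : ∑ t ∈ S, (t : ℝ) = ∑ i : Fin n, (a i : ℝ) := by
        rw [hS, Finset.sum_image hinj]
        push_cast
        rfl
      rw [← h3, ← h2, h1, ← hA]
      apply Finset.sum_le_sum
      intro p _
      apply Finset.sum_le_sum
      intro q _
      have hnp : ((p : ℕ) : ℝ) ≤ (n : ℝ) - 1 := by
        have := p.isLt
        have : ((p : ℕ) : ℝ) + 1 ≤ (n : ℝ) := by exact_mod_cast p.isLt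
        linarith
      split
      next =>
        apply le_of_eq
        push_cast
        try ring
      next =>
        have : 0 ≤ ((n : ℝ) - (p : ℕ) + (q : ℕ)) * D p q := by
          apply mul_nonneg _ (hD_nonneg p q)
          have hq : (0 : ℝ) ≤ ((q : ℕ) : ℝ) := by positivity
          linarith
        linarith
    have heq : ∑ i : Fin n, (a i : ℝ) = (n : ℝ) ^ 2 := le_antisymm hle hge
    have : ((∑ i : Fin n, a i : ℕ) : ℝ) = ((n ^ 2 : ℕ) : ℝ) := by
      push_cast
      rw [← heq]
    exact_mod_cast this
end

section
/- Let n be a positive integer and let a_1, …, a_n be positive integers with a_1 + a_2 + … + a_n = n². Suppose {1, 2, …, 2n} is partitioned into n pairs (s_i, t_i) with s_i < t_i and t_i − s_i = a_i for i = 1, …, n. Then {s_1, …, s_n} = {1, 2, …, n} and {t_1, …, t_n} = {n+1, n+2, …, 2n}. -/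
lemma bind_pair_eq (n : ℕ) (s t : Fin n → ℕ) (m : Multiset (Fin n)) :
    (m.bind fun i => ({s i, t i} : Multiset ℕ)) = m.map s + m.map t := by
  induction m using Multiset.induction with
  | empty => simp
  | cons a m ih =>
    simp [Multiset.cons_bind, ih, Multiset.insert_eq_cons, Multiset.cons_add,
      Multiset.add_cons]

lemma gauss_lemma (m : ℕ) : 2 * ∑ x ∈ Finset.range m, (x + 1) = m * (m + 1) := by
  induction m with
  | zero => simp
  | succ p ih => rw [Finset.sum_range_succ]; nlinarith [ih]

lemma key_lemma {n : ℕ} (f : Fin n → ℕ) (hinj : Function.Injective f)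
    (h1 : ∀ i, 1 ≤ f i) (hsum : 2 * ∑ i, f i = n * (n + 1)) :
    Finset.image f Finset.univ = Finset.Icc 1 n := by
  set S := Finset.image f Finset.univ with hS
  have hcard : S.card = n := by
    rw [hS, Finset.card_image_of_injective _ hinj, Finset.card_univ, Fintype.card_fin]
  set e := S.orderEmbOfFin hcard with he
  have hmem : ∀ k, e k ∈ S := fun k => S.orderEmbOfFin_mem hcard k
  have hge1 : ∀ x ∈ S, 1 ≤ x := by
    intro x hx
    rw [hS] at hx
    obtain ⟨i, _, rfl⟩ := Finset.mem_image.1 hx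
    exact h1 i
  have hlb' : ∀ m, ∀ hm : m < n, m + 1 ≤ e ⟨m, hm⟩ := by
    intro m
    induction m with
    | zero => intro hm; exact hge1 _ (hmem ⟨0, hm⟩)
    | succ p ih =>
      intro hm
      have hp : p < n := by omega
      have h1 := ih hp
      have hlt : e ⟨p, hp⟩ < e ⟨p + 1, hm⟩ := e.strictMono (by simp [Fin.lt_def])
      omega
  have hlb : ∀ k : Fin n, (k : ℕ) + 1 ≤ e k := fun k => by
    simpa using hlb' k.val k.isLt
  -- S = image e univ
  have hSimage : S = Finset.image e Finset.univ := by
    apply Finset.eq_of_subset_of_card_le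
    · intro x hx
      have : x ∈ Set.range e := by
        rw [Finset.range_orderEmbOfFin]; exact hx
      obtain ⟨k, rfl⟩ := this
      exact Finset.mem_image_of_mem _ (Finset.mem_univ k)
    · rw [Finset.card_image_of_injective _ e.injective, Finset.card_univ,
        Fintype.card_fin, hcard]
  have hsumS : ∑ x ∈ S, x = ∑ i, f i := by
    rw [hS, Finset.sum_image (fun x _ y _ h => hinj h)]
  have hsumS' : ∑ x ∈ S, x = ∑ k : Fin n, e k := by
    rw [hSimage, Finset.sum_image (fun x _ y _ h => e.injective h)]
  have hlbsum : 2 * ∑ k : Fin n, ((k : ℕ) + 1) = n * (n + 1) := by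
    rw [Fin.sum_univ_eq_sum_range (fun k => k + 1)]
    exact gauss_lemma n
  have hsums : ∑ k : Fin n, ((k : ℕ) + 1) = ∑ k : Fin n, e k := by
    have : 2 * ∑ k : Fin n, e k = n * (n + 1) := by
      rw [← hsumS', hsumS, hsum]
    omega
  have heq : ∀ k : Fin n, (k : ℕ) + 1 = e k :=
    fun k => (Finset.sum_eq_sum_iff_of_le (fun i _ => hlb i)).1 hsums k (Finset.mem_univ k)
  rw [hSimage]
  ext x
  simp only [Finset.mem_image, Finset.mem_univ, true_and, Finset.mem_Icc]
  constructor
  · rintro ⟨k, rfl⟩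
    rw [← heq k]
    have := k.isLt
    omega
  · rintro ⟨hx1, hxn⟩
    refine ⟨⟨x - 1, by omega⟩, ?_⟩
    rw [← heq ⟨x - 1, by omega⟩]
    simp
    omega

theorem stmt14 (n : ℕ) (hn : 0 < n) (a s t : Fin n → ℕ)
    (ha_pos : ∀ i, 0 < a i) (ha_sum : ∑ i, a i = n ^ 2)
    (hpart : IsPartitionOfIcc n s t) (hst : ∀ i, s i < t i)
    (hdiff : ∀ i, t i - s i = a i) :
    Finset.image s Finset.univ = Finset.Icc 1 n ∧
      Finset.image t Finset.univ = Finset.Icc (n + 1) (2 * n) := by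
  have hsplit : pairsMultiset n s t =
      Multiset.map s Finset.univ.val + Multiset.map t Finset.univ.val :=
    bind_pair_eq n s t _
  rw [IsPartitionOfIcc, hsplit] at hpart
  -- nodup
  have hnodup : (Multiset.map s Finset.univ.val + Multiset.map t Finset.univ.val).Nodup := by
    rw [hpart]
    exact (Multiset.nodup_range _).map (add_left_injective 1)
  obtain ⟨hns, hnt, hdisj⟩ := Multiset.nodup_add.1 hnodup
  have hsinj : Function.Injective s := fun i j h =>
    Multiset.inj_on_of_nodup_map hns i (Finset.mem_univ i) j (Finset.mem_univ j) h
  have htinj : Function.Injective t := fun i j h =>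
    Multiset.inj_on_of_nodup_map hnt i (Finset.mem_univ i) j (Finset.mem_univ j) h
  -- membership
  have hmem : ∀ x : ℕ, x ∈ Multiset.map s Finset.univ.val + Multiset.map t Finset.univ.val ↔
      1 ≤ x ∧ x ≤ 2 * n := by
    intro x
    rw [hpart]
    simp only [Multiset.mem_map, Multiset.mem_range]
    constructor
    · rintro ⟨k, hk, rfl⟩; omega
    · rintro ⟨hx1, hx2⟩; exact ⟨x - 1, by omega, by omega⟩
  -- sums
  have hsum_total : (∑ i, s i) + (∑ i, t i) = 2 * n ^ 2 + n := by
    have := congrArg Multiset.sum hpart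
    rw [Multiset.sum_add] at this
    have hl : (Multiset.map s Finset.univ.val).sum = ∑ i, s i := rfl
    have hr : (Multiset.map t Finset.univ.val).sum = ∑ i, t i := rfl
    have hrhs : (Multiset.map (· + 1) (Multiset.range (2 * n))).sum = 2 * n ^ 2 + n := by
      have hr0 : (Multiset.map (· + 1) (Multiset.range (2 * n))).sum =
          ∑ x ∈ Finset.range (2 * n), (x + 1) := rfl
      rw [hr0]
      have hg := gauss_lemma (2 * n)
      nlinarith [hg]
    rw [hl, hr] at this
    omega
  have ht_eq : ∀ i, t i = s i + a i := fun i => by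
    have := hdiff i; have := hst i; omega
  have hsum_t : (∑ i, t i) = (∑ i, s i) + n ^ 2 := by
    rw [← ha_sum, ← Finset.sum_add_distrib]
    exact Finset.sum_congr rfl fun i _ => ht_eq i
  have hsum_s : 2 * (∑ i, s i) = n * (n + 1) := by nlinarith [hsum_total, hsum_t]
  have hs1 : ∀ i, 1 ≤ s i := by
    intro i
    have : s i ∈ Multiset.map s Finset.univ.val + Multiset.map t Finset.univ.val := by
      apply Multiset.mem_add.2
      exact Or.inl (Multiset.mem_map_of_mem s (Finset.mem_univ i))
    exact ((hmem _).1 this).1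
  have hSeq : Finset.image s Finset.univ = Finset.Icc 1 n := key_lemma s hsinj hs1 hsum_s
  refine ⟨hSeq, ?_⟩
  -- t part
  have hTsub : Finset.image t Finset.univ ⊆ Finset.Icc (n + 1) (2 * n) := by
    intro x hx
    obtain ⟨i, _, rfl⟩ := Finset.mem_image.1 hx
    have hmt : t i ∈ Multiset.map s Finset.univ.val + Multiset.map t Finset.univ.val :=
      Multiset.mem_add.2 (Or.inr (Multiset.mem_map_of_mem t (Finset.mem_univ i)))
    have hrange := (hmem _).1 hmt
    have hnotS : t i ∉ Finset.Icc 1 n := by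
      rw [← hSeq]
      intro hcon
      obtain ⟨j, _, hj⟩ := Finset.mem_image.1 hcon
      exact Multiset.disjoint_left.1 hdisj
        (Multiset.mem_map_of_mem s (Finset.mem_univ j))
        (hj ▸ Multiset.mem_map_of_mem t (Finset.mem_univ i))
    simp only [Finset.mem_Icc] at hnotS ⊢
    omega
  apply Finset.eq_of_subset_of_card_le hTsub
  rw [Finset.card_image_of_injective _ htinj, Finset.card_univ, Fintype.card_fin,
    Nat.card_Icc]
  omega
end
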